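/- arXiv:2406.03648 — 7 statements merged into one kernel-verified Lean document; each statement's English description precedes it below -/
import Mathlib

section
/- Let G = (V,E) be a directed graph with n vertices, D ⊆ E an acyclic edge subset, τ a topological order of D (i.e., τ(u) < τ(v) for all (u,v) ∈ D), and w : E → ℕ a weight function satisfying w(u,v) ≥ |τ(v) - τ(u)| for every edge (u,v) ∈ E, with equality when (u,v) ∈ D. Then for any directed path P in G, the total weight of the edges of P that lie in D is at most n plus the total weight of the edges of P not in D; that is, w(P ∩ D) ≤ n + w(P \ D). -/
open Finset

private lemma stmt_1_aux {V : Type*} [Fintype V] [DecidableEq V] (n : ℕ)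
    (E D : Finset (V × V)) (hD : D ⊆ E)
    (τ : V ≃ Fin n)
    (hτD : ∀ e ∈ D, (τ e.1 : ℕ) < (τ e.2 : ℕ))
    (w : V × V → ℕ)
    (hw : ∀ e ∈ E, ((τ e.2 : ℤ) - (τ e.1 : ℤ)).natAbs ≤ w e)
    (hwD : ∀ e ∈ D, w e = ((τ e.2 : ℤ) - (τ e.1 : ℤ)).natAbs) :
    ∀ (p : List V), p.Chain' (fun u v => (u, v) ∈ E) → ∀ (hne : p ≠ []),
    ((((p.zip p.tail).filter (fun e => decide (e ∈ D))).map w).sum : ℤ)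
      + (τ (p.head hne) : ℤ) ≤
      (τ (p.getLast hne) : ℤ)
      + ((((p.zip p.tail).filter (fun e => decide (e ∉ D))).map w).sum : ℤ) := by
  intro p
  induction p with
  | nil => intro _ h; exact absurd rfl h
  | cons a q ih =>
    intro hp hne
    match q with
    | [] => simp
    | b :: r =>
      have hab : (a, b) ∈ E := hp.rel_head
      have hq : (b :: r).Chain' (fun u v => (u, v) ∈ E) := hp.tail
      have IH := ih hq (by simp)
      have hzip : ((a :: b :: r).zip (a :: b :: r).tail)
          = (a, b) :: ((b :: r).zip (b :: r).tail) := by simp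
      rw [hzip]
      have hlast : (a :: b :: r).getLast hne = (b :: r).getLast (by simp) := by
        simp [List.getLast_cons]
      rw [hlast]
      simp only [List.head_cons] at IH ⊢
      by_cases hDab : (a, b) ∈ D
      · have hlt : (τ a : ℕ) < (τ b : ℕ) := hτD _ hDab
        have hwab : w (a, b) = ((τ b : ℤ) - (τ a : ℤ)).natAbs := hwD _ hDab
        have hwab' : (w (a, b) : ℤ) = (τ b : ℤ) - (τ a : ℤ) := by
          rw [hwab, Int.natAbs_of_nonneg (by push_cast; omega)]
        simp only [List.filter_cons, hDab, not_true]
        simp only [decide_true, decide_false, if_true, if_false, ite_true, ite_false,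
          List.map_cons, List.sum_cons]
        push_cast [List.sum_cons] at IH ⊢
        omega
      · have hge : ((τ b : ℤ) - (τ a : ℤ)).natAbs ≤ w (a, b) := hw _ hab
        have hge' : (τ a : ℤ) - (τ b : ℤ) ≤ (w (a, b) : ℤ) := by
          omega
        simp only [List.filter_cons, hDab, not_false_iff]
        simp only [decide_true, decide_false, if_true, if_false, ite_true, ite_false,
          List.map_cons, List.sum_cons]
        push_cast [List.sum_cons] at IH ⊢
        omega

/-- Let `G = (V,E)` be a directed graph on `n` vertices, `D ⊆ E` an acyclic
edge subset with a topological order `τ` (so `τ u < τ v` for `(u,v) ∈ D`), and `w : E → ℕ`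
a weight function with `w (u,v) ≥ |τ v − τ u|` on every edge, with equality on `D`.
Then for every directed path `P` in `G`, `w(P ∩ D) ≤ n + w(P ∖ D)`. -/
theorem stmt_1 {V : Type*} [Fintype V] [DecidableEq V] (n : ℕ)
    (hn : Fintype.card V = n) (E D : Finset (V × V)) (hD : D ⊆ E)
    (τ : V ≃ Fin n)
    (hτD : ∀ e ∈ D, (τ e.1 : ℕ) < (τ e.2 : ℕ))
    (w : V × V → ℕ)
    (hw : ∀ e ∈ E, ((τ e.2 : ℤ) - (τ e.1 : ℤ)).natAbs ≤ w e)
    (hwD : ∀ e ∈ D, w e = ((τ e.2 : ℤ) - (τ e.1 : ℤ)).natAbs)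
    (p : List V) (hp : p.Chain' (fun u v => (u, v) ∈ E)) :
    (((p.zip p.tail).filter (fun e => decide (e ∈ D))).map w).sum ≤
      n + (((p.zip p.tail).filter (fun e => decide (e ∉ D))).map w).sum := by
  rcases eq_or_ne p [] with rfl | hne
  · simp
  · have h := stmt_1_aux n E D hD τ hτD w hw hwD p hp hne
    have h1 : ((τ (p.getLast hne) : ℕ) : ℤ) < n := by
      exact_mod_cast (τ (p.getLast hne)).isLt
    have h2 : (0 : ℤ) ≤ ((τ (p.head hne) : ℕ) : ℤ) := by positivity
    have : ((((p.zip p.tail).filter (fun e => decide (e ∈ D))).map w).sum : ℤ) ≤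
        (n : ℤ) + ((((p.zip p.tail).filter (fun e => decide (e ∉ D))).map w).sum : ℤ) := by
      omega
    exact_mod_cast this
end

section
/- Let G = (V,E) be a directed graph and let G' be the directed graph obtained from G by reversing every edge along a single directed path R in G (replacing each edge (u,v) of R by (v,u)). Then for every vertex subset S ⊆ V, the number of edges from S to V∖S changes by at most 1: ||E_G(S, V∖S)| − |E_{G'}(S, V∖S)|| ≤ 1. -/
open Finset

/-- Telescoping lemma: along a path, forward crossings minus backward crossings equals
the indicator of the first vertex minus the indicator of the last vertex. -/
private lemma tele {V : Type*} [DecidableEq V] (S : Finset V) (a : V) (q : List V) :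
    (((a :: q).zip q).countP (fun e => e.1 ∈ S ∧ e.2 ∉ S) : ℤ) -
      (((a :: q).zip q).countP (fun e => e.2 ∈ S ∧ e.1 ∉ S) : ℤ)
    = (if a ∈ S then (1 : ℤ) else 0) -
      (if (a :: q).getLast (by simp) ∈ S then (1 : ℤ) else 0) := by
  induction q generalizing a with
  | nil => by_cases ha : a ∈ S <;> simp [ha]
  | cons b r ih =>
    have h := ih b
    have hzip : ((a :: b :: r).zip (b :: r)) = (a, b) :: ((b :: r).zip r) := by simp
    rw [hzip]
    simp only [List.countP_cons]
    push_cast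
    have hlast : ((a :: b :: r).getLast (by simp)) = ((b :: r).getLast (by simp)) := by
      simp [List.getLast_cons]
    rw [hlast]
    by_cases ha : a ∈ S <;> by_cases hb : b ∈ S <;>
      simp [ha, hb] at h ⊢ <;> omega

/-- Let `G` be a directed (multi)graph with edge multiset `E`, and let `G'`
be obtained by reversing every edge along a single directed path `R` (given by its vertex
sequence `p`, whose consecutive edges are distinct and belong to `E`). Then for every vertex
subset `S`, the number of edges from `S` to its complement changes by at most `1`. -/
theorem stmt_2 {V : Type*} [Fintype V] [DecidableEq V]
    (E : Multiset (V × V)) (p : List V)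
    (hdistinct : (p.zip p.tail).Nodup)
    (hsub : (↑(p.zip p.tail) : Multiset (V × V)) ≤ E)
    (S : Finset V) :
    |((E.filter (fun e => e.1 ∈ S ∧ e.2 ∉ S)).card : ℤ) -
      (((E - ↑(p.zip p.tail) +
          (↑(p.zip p.tail) : Multiset (V × V)).map Prod.swap).filter
            (fun e => e.1 ∈ S ∧ e.2 ∉ S)).card : ℤ)| ≤ 1 := by
  set P : Multiset (V × V) := ↑(p.zip p.tail) with hP
  have hE : E = (E - P) + P := (tsub_add_cancel_of_le hsub).symm
  have pred : (V × V) → Prop := fun e => e.1 ∈ S ∧ e.2 ∉ S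
  have h1 : (E.filter (fun e => e.1 ∈ S ∧ e.2 ∉ S)).card
      = ((E - P).filter (fun e => e.1 ∈ S ∧ e.2 ∉ S)).card
        + (P.filter (fun e => e.1 ∈ S ∧ e.2 ∉ S)).card := by
    conv_lhs => rw [hE]
    rw [Multiset.filter_add, Multiset.card_add]
  have h2 : ((E - P + P.map Prod.swap).filter (fun e => e.1 ∈ S ∧ e.2 ∉ S)).card
      = ((E - P).filter (fun e => e.1 ∈ S ∧ e.2 ∉ S)).card
        + ((P.map Prod.swap).filter (fun e => e.1 ∈ S ∧ e.2 ∉ S)).card := by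
    rw [Multiset.filter_add, Multiset.card_add]
  have h3 : ((P.map Prod.swap).filter (fun e => e.1 ∈ S ∧ e.2 ∉ S)).card
      = (P.filter (fun e => e.2 ∈ S ∧ e.1 ∉ S)).card := by
    rw [Multiset.filter_map, Multiset.card_map]
    rfl
  rw [h1, h2, h3]
  push_cast
  rw [add_sub_add_left_eq_sub]
  have hcount1 : (P.filter (fun e => e.1 ∈ S ∧ e.2 ∉ S)).card
      = (p.zip p.tail).countP (fun e => e.1 ∈ S ∧ e.2 ∉ S) := by
    simp [hP, List.countP_eq_length_filter]
  have hcount2 : (P.filter (fun e => e.2 ∈ S ∧ e.1 ∉ S)).card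
      = (p.zip p.tail).countP (fun e => e.2 ∈ S ∧ e.1 ∉ S) := by
    simp [hP, List.countP_eq_length_filter]
  cases p with
  | nil => simp [hP]
  | cons a q =>
    have := tele S a q
    simp only [List.tail_cons] at hcount1 hcount2
    rw [hcount1, hcount2, this]
    split_ifs <;> simp
end

section
/- Let G = (V,E) be a directed graph and let S₁, ..., S_k be a sequence of vertex sets where S_i ⊆ V_{i-1}, with V₀ = V and V_i = V_{i-1} ∖ S_i. Let J ⊆ {1,...,k} and S = ∪_{j∈J} S_j. Then every edge of G from S to V∖S belongs to ∪_{i∈J} E_{G[V_{i-1}]}(S_i, V_{i-1}∖S_i) ∪ ∪_{i∉J} E_{G[V_{i-1}]}(V_{i-1}∖S_i, S_i). -/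
open Finset

/-- The set of vertices remaining after the cuts `S 0, …, S (i-1)` have been carved out:
`V_i = V ∖ (S 0 ∪ ⋯ ∪ S (i-1))`. -/
def Vrem {V : Type*} [Fintype V] [DecidableEq V] (S : ℕ → Finset V) (i : ℕ) : Finset V :=
  Finset.univ \ (Finset.range i).biUnion S

lemma mem_Vrem_iff {V : Type*} [Fintype V] [DecidableEq V] (S : ℕ → Finset V) (i : ℕ)
    (x : V) : x ∈ Vrem S i ↔ ∀ m < i, x ∉ S m := by
  simp [Vrem]

/-- Given a sequence of cuts `S i ⊆ V_i` (with `V_0 = V`,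
`V_{i+1} = V_i ∖ S i`) and `J ⊆ {0,…,k-1}`, every edge of `G` leaving the union
`T = ⋃_{j ∈ J} S j` belongs to the out-boundary of some selected cut `S i` (`i ∈ J`), taken
inside the induced subgraph `G[V_i]`, or to the in-boundary of some unselected cut
`S i` (`i ∉ J`), taken inside `G[V_i]`. -/
theorem stmt_5 {V : Type*} [Fintype V] [DecidableEq V]
    (E : Finset (V × V)) (S : ℕ → Finset V) (k : ℕ)
    (hS : ∀ i < k, S i ⊆ Vrem S i) (J : Finset ℕ) (hJ : J ⊆ Finset.range k) :
    ∀ e ∈ E, e.1 ∈ J.biUnion S → e.2 ∉ J.biUnion S →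
      (∃ i ∈ J, e.1 ∈ S i ∧ e.2 ∈ Vrem S i \ S i) ∨
      (∃ i ∈ Finset.range k, i ∉ J ∧ e.1 ∈ Vrem S i \ S i ∧ e.2 ∈ S i) := by
  intro e _ hu hv
  obtain ⟨j, hjJ, huj⟩ := Finset.mem_biUnion.mp hu
  have hjk : j < k := Finset.mem_range.mp (hJ hjJ)
  by_cases hvi : ∃ i < k, e.2 ∈ S i
  · obtain ⟨i, hik, hvSi⟩ := hvi
    have hiJ : i ∉ J := fun h => hv (Finset.mem_biUnion.mpr ⟨i, h, hvSi⟩)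
    have hij : i ≠ j := fun h => hiJ (h ▸ hjJ)
    rcases lt_or_gt_of_ne hij with hlt | hgt
    · -- i < j : unselected in-boundary at i
      right
      refine ⟨i, Finset.mem_range.mpr hik, hiJ, Finset.mem_sdiff.mpr ⟨?_, ?_⟩, hvSi⟩
      · exact (mem_Vrem_iff S i e.1).mpr fun m hm =>
          (mem_Vrem_iff S j e.1).mp (hS j hjk huj) m (hm.trans hlt)
      · exact (mem_Vrem_iff S j e.1).mp (hS j hjk huj) i hlt
    · -- j < i : selected out-boundary at j
      left
      refine ⟨j, hjJ, huj, Finset.mem_sdiff.mpr ⟨?_, ?_⟩⟩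
      · exact (mem_Vrem_iff S j e.2).mpr fun m hm =>
          (mem_Vrem_iff S i e.2).mp (hS i hik hvSi) m (hm.trans hgt)
      · exact (mem_Vrem_iff S i e.2).mp (hS i hik hvSi) j hgt
  · push_neg at hvi
    left
    refine ⟨j, hjJ, huj, Finset.mem_sdiff.mpr ⟨?_, hvi j hjk⟩⟩
    exact (mem_Vrem_iff S j e.2).mpr fun m hm => hvi m (hm.trans hjk)
end

section
/- Consider a flow instance on a directed graph G = (V,E) with capacities c, source vector Δ, and sink vector ∇, and edge weights w : E → ℕ₊. Let f* be a feasible (Δ,∇)-flow with average w-length at most h, i.e., w(f*) ≤ |f*|·h. Let f be any feasible (Δ,∇)-flow such that (i) in the residual graph G_f, the w-distance from any unsaturated source to any unsaturated sink exceeds 3h, and (ii) w(f) ≤ 9h·|f|. Then |f| ≥ (1/6)·|f*|. -/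
open Finset

/-- Net flow leaving `v`: flow on out-edges minus flow on in-edges. -/
def fOut {V : Type*} [DecidableEq V] (E : Finset (V × V)) (f : V × V → ℚ) (v : V) : ℚ :=
  (∑ e ∈ E.filter (fun e => e.1 = v), f e) - ∑ e ∈ E.filter (fun e => e.2 = v), f e

/-- Excess of `f` at `v`: `max{Δ(v) − f^out(v) − ∇(v), 0}`. -/
def exF {V : Type*} [DecidableEq V] (E : Finset (V × V)) (srcW sinkW : V → ℕ)
    (f : V × V → ℚ) (v : V) : ℚ :=
  max ((srcW v : ℚ) - fOut E f v - (sinkW v : ℚ)) 0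

/-- Absorption of `f` at `v`: `min{Δ(v) − f^out(v), ∇(v)}`. -/
def absF {V : Type*} [DecidableEq V] (E : Finset (V × V)) (srcW sinkW : V → ℕ)
    (f : V × V → ℚ) (v : V) : ℚ :=
  min ((srcW v : ℚ) - fOut E f v) (sinkW v : ℚ)

/-- Value `|f| = ∑_v abs_f(v)` of the flow. -/
def valF {V : Type*} [Fintype V] [DecidableEq V] (E : Finset (V × V)) (srcW sinkW : V → ℕ)
    (f : V × V → ℚ) : ℚ :=
  ∑ v, absF E srcW sinkW f v

/-- `f` is a `(Δ,∇)`-flow: nonnegative, supported on `E`, with `0 ≤ ex_f ≤ Δ`. -/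
def IsFlow {V : Type*} [DecidableEq V] (E : Finset (V × V)) (srcW sinkW : V → ℕ)
    (f : V × V → ℚ) : Prop :=
  (∀ e, 0 ≤ f e) ∧ (∀ e, e ∉ E → f e = 0) ∧ ∀ v, exF E srcW sinkW f v ≤ (srcW v : ℚ)

/-- Residual weight of a step from `u` to `v` in the residual graph `G_f` (`⊤` if no residual
edge from `u` to `v` exists): a forward residual edge `(u,v)` exists when `f(u,v) < c(u,v)`
and carries weight `w(u,v)`, a backward residual edge when `f(v,u) > 0`, carrying weight
`w(v,u)`. -/
noncomputable def resW {V : Type*} [DecidableEq V] (E : Finset (V × V)) (c : V × V → ℕ) (w : V × V → ℕ)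
    (f : V × V → ℚ) (u v : V) : ℕ∞ :=
  min (if (u, v) ∈ E ∧ f (u, v) < (c (u, v) : ℚ) then ((w (u, v) : ℕ) : ℕ∞) else ⊤)
      (if (v, u) ∈ E ∧ 0 < f (v, u) then ((w (v, u) : ℕ) : ℕ∞) else ⊤)

lemma enat_sInf_mem {A : Set ℕ∞} (h : A.Nonempty) : sInf A ∈ A := by
  obtain ⟨m, hm, hmin⟩ := (IsWellFounded.wf (r := (· < · : ℕ∞ → ℕ∞ → Prop))).has_min A h
  have : sInf A = m := le_antisymm (sInf_le hm) (le_sInf fun x hx => not_lt.1 (hmin x hx))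
  rw [this]; exact hm

lemma pathW_concat {V : Type*} (g : V → V → ℕ∞) :
    ∀ (p : List V) (u v : V), p.getLast? = some u →
      (((p ++ [v]).zip (p ++ [v]).tail).map (fun st => g st.1 st.2)).sum
        = ((p.zip p.tail).map (fun st => g st.1 st.2)).sum + g u v := by
  intro p
  induction p with
  | nil => intro u v hu; simp at hu
  | cons a q ih =>
    intro u v hu
    cases q with
    | nil =>
      simp only [List.getLast?_singleton, Option.some.injEq] at hu
      subst hu; simp
    | cons b r =>
      have hu' : (b :: r).getLast? = some u := by
        rwa [List.getLast?_cons_cons] at hu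
      have h2 := ih u v hu'
      simp only [List.cons_append, List.zip_cons_cons, List.tail_cons, List.map_cons,
        List.sum_cons] at h2 ⊢
      rw [h2, add_assoc]

lemma sum_phi_fOut {V : Type*} [Fintype V] [DecidableEq V] (E : Finset (V × V))
    (q : V × V → ℚ) (φ : V → ℚ) :
    ∑ v, φ v * fOut E q v = ∑ e ∈ E, q e * (φ e.1 - φ e.2) := by
  unfold fOut
  have h1 : ∑ v, φ v * (∑ e ∈ E.filter (fun e => e.1 = v), q e)
      = ∑ e ∈ E, q e * φ e.1 := by
    rw [← Finset.sum_fiberwise_of_maps_to (fun e (_ : e ∈ E) => Finset.mem_univ e.1)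
      (fun e => q e * φ e.1)]
    refine Finset.sum_congr rfl fun v _ => ?_
    rw [Finset.mul_sum]
    refine Finset.sum_congr rfl fun e he => ?_
    rw [Finset.mem_filter] at he
    rw [he.2]; ring
  have h2 : ∑ v, φ v * (∑ e ∈ E.filter (fun e => e.2 = v), q e)
      = ∑ e ∈ E, q e * φ e.2 := by
    rw [← Finset.sum_fiberwise_of_maps_to (fun e (_ : e ∈ E) => Finset.mem_univ e.2)
      (fun e => q e * φ e.2)]
    refine Finset.sum_congr rfl fun v _ => ?_
    rw [Finset.mul_sum]
    refine Finset.sum_congr rfl fun e he => ?_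
    rw [Finset.mem_filter] at he
    rw [he.2]; ring
  simp only [mul_sub]
  rw [Finset.sum_sub_distrib, h1, h2, ← Finset.sum_sub_distrib]

/-- Distance in the residual graph from the set of unsaturated sources. -/
noncomputable def resD {V : Type*} [DecidableEq V] (E : Finset (V × V)) (c : V × V → ℕ)
    (srcW sinkW : V → ℕ) (w : V × V → ℕ) (f : V × V → ℚ) (v : V) : ℕ∞ :=
  sInf {x | ∃ p : List V, ∃ s, 0 < exF E srcW sinkW f s ∧ p.head? = some s ∧
    p.getLast? = some v ∧ ((p.zip p.tail).map (fun st => resW E c w f st.1 st.2)).sum = x}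

/-- The capped potential. -/
noncomputable def phi {V : Type*} [DecidableEq V] (E : Finset (V × V)) (c : V × V → ℕ)
    (srcW sinkW : V → ℕ) (w : V × V → ℕ) (f : V × V → ℚ) (h : ℕ) (v : V) : ℚ :=
  ((min (resD E c srcW sinkW w f v) ((3*h+1 : ℕ) : ℕ∞)).toNat : ℚ)

section phi
variable {V : Type*} [DecidableEq V] (E : Finset (V × V)) (c : V × V → ℕ)
  (srcW sinkW : V → ℕ) (w : V × V → ℕ) (f : V × V → ℚ) (h : ℕ)

lemma phi_nonneg (v : V) : 0 ≤ phi E c srcW sinkW w f h v := by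
  unfold phi; positivity

lemma phi_le (v : V) : phi E c srcW sinkW w f h v ≤ ((3*h+1 : ℕ) : ℚ) := by
  unfold phi
  have : (min (resD E c srcW sinkW w f v) ((3*h+1 : ℕ) : ℕ∞)).toNat ≤ 3*h+1 := by
    have h1 : (min (resD E c srcW sinkW w f v) ((3*h+1 : ℕ) : ℕ∞)) ≤ ((3*h+1 : ℕ) : ℕ∞) :=
      min_le_right _ _
    have h2 := ENat.toNat_le_toNat h1 (ENat.coe_ne_top _)
    rwa [ENat.toNat_coe] at h2
  exact_mod_cast this

lemma phi_src {s : V} (hs : 0 < exF E srcW sinkW f s) : phi E c srcW sinkW w f h s = 0 := by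
  have h0 : (0 : ℕ∞) ∈ {x | ∃ p : List V, ∃ s', 0 < exF E srcW sinkW f s' ∧ p.head? = some s' ∧
      p.getLast? = some s ∧ ((p.zip p.tail).map (fun st => resW E c w f st.1 st.2)).sum = x} :=
    ⟨[s], s, hs, by simp, by simp, by simp⟩
  have hD : resD E c srcW sinkW w f s = 0 := le_antisymm (sInf_le h0) zero_le
  unfold phi
  rw [hD]
  simp

lemma phi_sink
    (hdist : ∀ s t : V, 0 < exF E srcW sinkW f s →
      absF E srcW sinkW f t < (sinkW t : ℚ) →
      ∀ p : List V, p.head? = some s → p.getLast? = some t →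
        ((3 * h : ℕ) : ℕ∞) < ((p.zip p.tail).map (fun st => resW E c w f st.1 st.2)).sum)
    {t : V} (ht : absF E srcW sinkW f t < (sinkW t : ℚ)) :
    phi E c srcW sinkW w f h t = ((3*h+1 : ℕ) : ℚ) := by
  have hD : ((3*h+1 : ℕ) : ℕ∞) ≤ resD E c srcW sinkW w f t := by
    apply le_sInf
    rintro x ⟨p, s, hs, hhd, hlast, rfl⟩
    have := hdist s t hs ht p hhd hlast
    have h3 : ((3*h : ℕ) : ℕ∞) + 1 ≤ _ := (ENat.add_one_le_iff (ENat.coe_ne_top _)).2 this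
    calc ((3*h+1 : ℕ) : ℕ∞) = ((3*h : ℕ) : ℕ∞) + 1 := by push_cast; ring
      _ ≤ _ := h3
  unfold phi
  rw [min_eq_right hD, ENat.toNat_coe]

lemma phi_tri (u v : V) (r : ℕ) (hres : resW E c w f u v ≤ ((r : ℕ) : ℕ∞)) :
    phi E c srcW sinkW w f h v ≤ phi E c srcW sinkW w f h u + (r : ℚ) := by
  by_cases hDu : ((3*h+1 : ℕ) : ℕ∞) ≤ resD E c srcW sinkW w f u
  · have hu : phi E c srcW sinkW w f h u = ((3*h+1 : ℕ) : ℚ) := by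
      unfold phi; rw [min_eq_right hDu, ENat.toNat_coe]
    have := phi_le E c srcW sinkW w f h v
    rw [hu]
    have : (0:ℚ) ≤ (r:ℚ) := by positivity
    linarith [phi_le E c srcW sinkW w f h v]
  · push_neg at hDu
    have hDu_ne : resD E c srcW sinkW w f u ≠ ⊤ :=
      ne_top_of_lt (lt_of_lt_of_le hDu le_top)
    have hne : {x | ∃ p : List V, ∃ s, 0 < exF E srcW sinkW f s ∧ p.head? = some s ∧
        p.getLast? = some u ∧
        ((p.zip p.tail).map (fun st => resW E c w f st.1 st.2)).sum = x}.Nonempty := by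
      by_contra hc
      rw [Set.not_nonempty_iff_eq_empty] at hc
      have : resD E c srcW sinkW w f u = ⊤ := by unfold resD; rw [hc]; simp
      exact hDu_ne this
    obtain ⟨p, s, hs, hhd, hlast, hpw⟩ := enat_sInf_mem hne
    -- extend the path by v
    have hmem : resD E c srcW sinkW w f u + resW E c w f u v ∈
        {x | ∃ p : List V, ∃ s', 0 < exF E srcW sinkW f s' ∧ p.head? = some s' ∧
          p.getLast? = some v ∧
          ((p.zip p.tail).map (fun st => resW E c w f st.1 st.2)).sum = x} := by
      refine ⟨p ++ [v], s, hs, ?_, List.getLast?_concat, ?_⟩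
      · rw [List.head?_append, hhd]; rfl
      · rw [pathW_concat (resW E c w f) p u v hlast, hpw]; rfl
    have hDv : resD E c srcW sinkW w f v ≤ resD E c srcW sinkW w f u + ((r:ℕ) : ℕ∞) :=
      le_trans (sInf_le hmem) (add_le_add le_rfl hres)
    have key : (min (resD E c srcW sinkW w f v) ((3*h+1 : ℕ) : ℕ∞)).toNat
        ≤ (resD E c srcW sinkW w f u).toNat + r := by
      have h1 : min (resD E c srcW sinkW w f v) ((3*h+1 : ℕ) : ℕ∞)
          ≤ resD E c srcW sinkW w f u + ((r:ℕ) : ℕ∞) := le_trans (min_le_left _ _) hDv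
      have h2 := ENat.toNat_le_toNat h1
        (WithTop.add_ne_top.2 ⟨hDu_ne, ENat.coe_ne_top _⟩)
      rwa [ENat.toNat_add hDu_ne (by simp), ENat.toNat_coe] at h2
    have hu : phi E c srcW sinkW w f h u = ((resD E c srcW sinkW w f u).toNat : ℚ) := by
      unfold phi; rw [min_eq_left (le_of_lt hDu)]
    rw [hu]
    unfold phi
    exact_mod_cast key
end phi

/-- Let `f*` be a feasible `(Δ,∇)`-flow of average `w`-length at most `h`
(`w(f*) ≤ |f*|·h`), and let `f` be a feasible `(Δ,∇)`-flow such that (i) in the residual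
graph `G_f` the `w`-distance from every unsaturated source to every unsaturated sink exceeds
`3h`, and (ii) `w(f) ≤ 9h·|f|`. Then `|f| ≥ (1/6)·|f*|`. -/
theorem stmt_8 {V : Type*} [Fintype V] [DecidableEq V]
    (E : Finset (V × V)) (c : V × V → ℕ) (srcW sinkW : V → ℕ)
    (w : V × V → ℕ) (hw : ∀ e ∈ E, 1 ≤ w e) (h : ℕ)
    (fstar f : V × V → ℚ)
    (hfstar : IsFlow E srcW sinkW fstar)
    (hfstarFeas : ∀ e ∈ E, fstar e ≤ (c e : ℚ))
    (hfstarShort : ∑ e ∈ E, (w e : ℚ) * fstar e ≤ valF E srcW sinkW fstar * (h : ℚ))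
    (hf : IsFlow E srcW sinkW f)
    (hfFeas : ∀ e ∈ E, f e ≤ (c e : ℚ))
    (hdist : ∀ s t : V, 0 < exF E srcW sinkW f s →
      absF E srcW sinkW f t < (sinkW t : ℚ) →
      ∀ p : List V, p.head? = some s → p.getLast? = some t →
        ((3 * h : ℕ) : ℕ∞) < ((p.zip p.tail).map (fun st => resW E c w f st.1 st.2)).sum)
    (hlen : ∑ e ∈ E, (w e : ℚ) * f e ≤ 9 * (h : ℚ) * valF E srcW sinkW f) :
    valF E srcW sinkW f ≥ (1 / 6) * valF E srcW sinkW fstar := by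
  obtain ⟨hfs_nn, hfs_supp, -⟩ := hfstar
  obtain ⟨hf_nn, hf_supp, -⟩ := hf
  set Φ : V → ℚ := phi E c srcW sinkW w f h with hΦdef
  set M : ℚ := ((3*h+1 : ℕ) : ℚ) with hMdef
  have hM0 : (0:ℚ) < M := by rw [hMdef]; exact_mod_cast Nat.succ_pos _
  -- per-edge bound
  have hedge : ∀ e ∈ E, (fstar e - f e) * (Φ e.2 - Φ e.1) ≤ (w e : ℚ) * (fstar e + f e) := by
    intro e he
    have wnn : (0:ℚ) ≤ (w e : ℚ) := by positivity
    rcases lt_trichotomy (fstar e) (f e) with hlt | heq | hgt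
    · have hres : resW E c w f e.2 e.1 ≤ ((w e : ℕ) : ℕ∞) := by
        unfold resW
        simp only [Prod.mk.eta]
        refine le_trans (min_le_right _ _) ?_
        rw [if_pos ⟨he, lt_of_le_of_lt (hfs_nn e) hlt⟩]
      have htr := phi_tri E c srcW sinkW w f h e.2 e.1 (w e) hres
      rw [← hΦdef] at htr
      have h1 : 0 ≤ (f e - fstar e) * ((w e : ℚ) - (Φ e.1 - Φ e.2)) :=
        mul_nonneg (by linarith) (by linarith)
      nlinarith [mul_nonneg wnn (hfs_nn e)]
    · rw [heq, sub_self, zero_mul]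
      exact mul_nonneg wnn (by linarith [hfs_nn e, hf_nn e])
    · have hres : resW E c w f e.1 e.2 ≤ ((w e : ℕ) : ℕ∞) := by
        unfold resW
        simp only [Prod.mk.eta]
        refine le_trans (min_le_left _ _) ?_
        rw [if_pos ⟨he, lt_of_lt_of_le hgt (hfstarFeas e he)⟩]
      have htr := phi_tri E c srcW sinkW w f h e.1 e.2 (w e) hres
      rw [← hΦdef] at htr
      have h1 : 0 ≤ (fstar e - f e) * ((w e : ℚ) - (Φ e.2 - Φ e.1)) :=
        mul_nonneg (by linarith) (by linarith)
      nlinarith [mul_nonneg wnn (hf_nn e)]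
  -- per-vertex bound
  have hvertex : ∀ v, M * (absF E srcW sinkW fstar v - absF E srcW sinkW f v)
      ≤ Φ v * (fOut E f v - fOut E fstar v) := by
    intro v
    have hphile : Φ v ≤ M := phi_le E c srcW sinkW w f h v
    have hphinn : 0 ≤ Φ v := phi_nonneg E c srcW sinkW w f h v
    have habs_s : absF E srcW sinkW fstar v
        = min ((srcW v : ℚ) - fOut E fstar v) (sinkW v : ℚ) := rfl
    have habs_f : absF E srcW sinkW f v
        = min ((srcW v : ℚ) - fOut E f v) (sinkW v : ℚ) := rfl
    set a : ℚ := (srcW v : ℚ) - fOut E fstar v with ha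
    set b : ℚ := (srcW v : ℚ) - fOut E f v with hb1
    have hd : fOut E f v - fOut E fstar v = a - b := by rw [ha, hb1]; ring
    rw [habs_s, habs_f, hd]
    have hminsa : min a (sinkW v : ℚ) ≤ a := min_le_left _ _
    rcases lt_or_ge b (sinkW v : ℚ) with hb | hb
    · have hsink : absF E srcW sinkW f v < (sinkW v : ℚ) := by
        rw [habs_f, min_eq_left hb.le]; exact hb
      have hphi : Φ v = M := phi_sink E c srcW sinkW w f h hdist hsink
      rw [hphi, min_eq_left hb.le]
      nlinarith
    · rw [min_eq_right hb]
      rcases eq_or_lt_of_le hb with hbe | hbl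
      · rcases le_or_gt (sinkW v : ℚ) a with hsa | hsa
        · rw [min_eq_right hsa, sub_self, mul_zero]
          exact mul_nonneg hphinn (by linarith)
        · rw [min_eq_left hsa.le]
          nlinarith
      · have hex : 0 < exF E srcW sinkW f v := by
          have : exF E srcW sinkW f v = max (b - (sinkW v : ℚ)) 0 := rfl
          rw [this]
          exact lt_max_iff.2 (Or.inl (by linarith))
        have hphi0 : Φ v = 0 := phi_src E c srcW sinkW w f h hex
        rw [hphi0, zero_mul]
        have := min_le_right a (sinkW v : ℚ)
        nlinarith
  -- summation identity
  have key2 : ∑ v, Φ v * (fOut E f v - fOut E fstar v)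
      = ∑ e ∈ E, (fstar e - f e) * (Φ e.2 - Φ e.1) := by
    have l1 := sum_phi_fOut E f Φ
    have l2 := sum_phi_fOut E fstar Φ
    calc ∑ v, Φ v * (fOut E f v - fOut E fstar v)
        = (∑ v, Φ v * fOut E f v) - ∑ v, Φ v * fOut E fstar v := by
          rw [← Finset.sum_sub_distrib]
          exact Finset.sum_congr rfl fun v _ => mul_sub _ _ _
      _ = (∑ e ∈ E, f e * (Φ e.1 - Φ e.2)) - ∑ e ∈ E, fstar e * (Φ e.1 - Φ e.2) := by
          rw [l1, l2]
      _ = ∑ e ∈ E, (fstar e - f e) * (Φ e.2 - Φ e.1) := by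
          rw [← Finset.sum_sub_distrib]
          exact Finset.sum_congr rfl fun e _ => by ring
  -- assemble
  have chain : M * (valF E srcW sinkW fstar - valF E srcW sinkW f)
      ≤ valF E srcW sinkW fstar * (h : ℚ) + 9 * (h : ℚ) * valF E srcW sinkW f := by
    have c1 : M * (valF E srcW sinkW fstar - valF E srcW sinkW f)
        = ∑ v, M * (absF E srcW sinkW fstar v - absF E srcW sinkW f v) := by
      unfold valF
      rw [← Finset.sum_sub_distrib, Finset.mul_sum]
    have c2 : ∑ e ∈ E, (fstar e - f e) * (Φ e.2 - Φ e.1)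
        ≤ ∑ e ∈ E, (w e : ℚ) * (fstar e + f e) := Finset.sum_le_sum hedge
    have c3 : ∑ e ∈ E, (w e : ℚ) * (fstar e + f e)
        = (∑ e ∈ E, (w e : ℚ) * fstar e) + ∑ e ∈ E, (w e : ℚ) * f e := by
      rw [← Finset.sum_add_distrib]
      exact Finset.sum_congr rfl fun e _ => by ring
    calc M * (valF E srcW sinkW fstar - valF E srcW sinkW f)
        = ∑ v, M * (absF E srcW sinkW fstar v - absF E srcW sinkW f v) := c1
      _ ≤ ∑ v, Φ v * (fOut E f v - fOut E fstar v) := Finset.sum_le_sum fun v _ => hvertex v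
      _ = ∑ e ∈ E, (fstar e - f e) * (Φ e.2 - Φ e.1) := key2
      _ ≤ ∑ e ∈ E, (w e : ℚ) * (fstar e + f e) := c2
      _ = (∑ e ∈ E, (w e : ℚ) * fstar e) + ∑ e ∈ E, (w e : ℚ) * f e := c3
      _ ≤ valF E srcW sinkW fstar * (h : ℚ) + 9 * (h : ℚ) * valF E srcW sinkW f := by
          linarith [hfstarShort, hlen]
  have hwf_nn : (0:ℚ) ≤ ∑ e ∈ E, (w e : ℚ) * f e :=
    Finset.sum_nonneg fun e _ => mul_nonneg (by positivity) (hf_nn e)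
  by_cases h0 : h = 0
  · subst h0
    have hsum0 : ∑ e ∈ E, (w e : ℚ) * f e = 0 :=
      le_antisymm (by simpa using hlen) hwf_nn
    have hsum0s : ∑ e ∈ E, (w e : ℚ) * fstar e = 0 :=
      le_antisymm (by simpa using hfstarShort)
        (Finset.sum_nonneg fun e _ => mul_nonneg (by positivity) (hfs_nn e))
    have hfe : ∀ e ∈ E, f e = 0 := by
      intro e he
      have h1 := (Finset.sum_eq_zero_iff_of_nonneg
        (fun e _ => mul_nonneg (by positivity) (hf_nn e))).1 hsum0 e he
      have hw1 : (1:ℚ) ≤ (w e : ℚ) := by exact_mod_cast hw e he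
      rcases mul_eq_zero.1 h1 with h2 | h2
      · linarith
      · exact h2
    have hfse : ∀ e ∈ E, fstar e = 0 := by
      intro e he
      have h1 := (Finset.sum_eq_zero_iff_of_nonneg
        (fun e _ => mul_nonneg (by positivity) (hfs_nn e))).1 hsum0s e he
      have hw1 : (1:ℚ) ≤ (w e : ℚ) := by exact_mod_cast hw e he
      rcases mul_eq_zero.1 h1 with h2 | h2
      · linarith
      · exact h2
    have hOut : ∀ v, fOut E f v = 0 := by
      intro v
      unfold fOut
      rw [Finset.sum_eq_zero fun e he => hfe e (Finset.mem_of_mem_filter e he),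
        Finset.sum_eq_zero fun e he => hfe e (Finset.mem_of_mem_filter e he), sub_zero]
    have hOuts : ∀ v, fOut E fstar v = 0 := by
      intro v
      unfold fOut
      rw [Finset.sum_eq_zero fun e he => hfse e (Finset.mem_of_mem_filter e he),
        Finset.sum_eq_zero fun e he => hfse e (Finset.mem_of_mem_filter e he), sub_zero]
    have heqv : valF E srcW sinkW f = valF E srcW sinkW fstar :=
      Finset.sum_congr rfl fun v _ => by unfold absF; rw [hOut v, hOuts v]
    have hnn : 0 ≤ valF E srcW sinkW f :=
      Finset.sum_nonneg fun v _ => by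
        unfold absF
        rw [hOut v, sub_zero]
        exact le_min (by positivity) (by positivity)
    linarith
  · have hh1 : (1:ℚ) ≤ (h : ℚ) := by exact_mod_cast Nat.one_le_iff_ne_zero.2 h0
    have hvFnn : 0 ≤ valF E srcW sinkW f := by nlinarith
    have hMcast : M = 3 * (h:ℚ) + 1 := by rw [hMdef]; push_cast; ring
    rw [hMcast] at chain
    nlinarith [mul_nonneg (by linarith : (0:ℚ) ≤ (h:ℚ)) hvFnn]
end

section
/- Let G = (V,E) be a directed graph with capacities c, with a flow instance (Δ,∇) and weights w : E → ℕ₊. Suppose there exists a (possibly fractional) feasible (Δ,∇)-flow f* with w(f*) ≤ |f*|·h. Then there exists an integral feasible (Δ,∇)-flow f with |f| ≥ (1/6)|f*| and w(f) ≤ 9h·|f|. -/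
open Finset
set_option linter.unusedSectionVars false
set_option maxHeartbeats 1000000

namespace Stmt9

variable {V : Type*} [Fintype V] [DecidableEq V]

lemma fOut_add (E : Finset (V×V)) (f g : V×V → ℚ) (v : V) :
    fOut E (fun e => f e + g e) v = fOut E f v + fOut E g v := by
  simp only [fOut, Finset.sum_add_distrib]; ring

lemma fOut_sub (E : Finset (V×V)) (f g : V×V → ℚ) (v : V) :
    fOut E (fun e => f e - g e) v = fOut E f v - fOut E g v := by
  simp only [fOut, Finset.sum_sub_distrib]; ring

lemma fOut_smul (E : Finset (V×V)) (a : ℚ) (f : V×V → ℚ) (v : V) :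
    fOut E (fun e => a * f e) v = a * fOut E f v := by
  simp only [fOut, ← Finset.mul_sum]; ring

lemma fOut_sum_zero (E : Finset (V×V)) (f : V×V → ℚ) :
    ∑ v, fOut E f v = 0 := by
  simp only [fOut, Finset.sum_sub_distrib]
  rw [Finset.sum_fiberwise_of_maps_to (fun x _ => Finset.mem_univ x.1) f,
      Finset.sum_fiberwise_of_maps_to (fun x _ => Finset.mem_univ x.2) f]
  ring

lemma fOut_single (E : Finset (V×V)) (e0 : V×V) (he : e0 ∈ E) (v : V) :
    fOut E (fun e => if e = e0 then (1:ℚ) else 0) v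
      = (if e0.1 = v then 1 else 0) - (if e0.2 = v then 1 else 0) := by
  simp only [fOut, Finset.sum_ite_eq' , Finset.mem_filter, he, true_and]

def Adj (x : V×V → ℚ) (a b : V) : Prop := 0 < x (a,b) ∨ x (b,a) < 0

lemma step_out (E : Finset (V×V)) {x : V×V → ℚ} (hsupp : ∀ e, x e ≠ 0 → e ∈ E) {v : V}
    (hv : 0 < fOut E x v) : ∃ w, Adj x v w := by
  by_contra hc
  push_neg at hc
  simp only [Adj, not_or, not_lt] at hc
  have h1 : ∑ e ∈ E.filter (fun e => e.1 = v), x e ≤ 0 := by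
    apply Finset.sum_nonpos
    intro e he
    rw [Finset.mem_filter] at he
    have := (hc e.2).1
    rwa [← he.2, Prod.mk.eta] at this
  have h2 : 0 ≤ ∑ e ∈ E.filter (fun e => e.2 = v), x e := by
    apply Finset.sum_nonneg
    intro e he
    rw [Finset.mem_filter] at he
    have := (hc e.1).2
    rwa [← he.2, Prod.mk.eta] at this
  have : fOut E x v ≤ 0 := by unfold fOut; linarith
  linarith

lemma step_through (E : Finset (V×V)) {x : V×V → ℚ} (hsupp : ∀ e, x e ≠ 0 → e ∈ E) {p v : V}
    (hadj : Adj x p v) (hv : 0 ≤ fOut E x v) : ∃ w, Adj x v w := by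
  by_contra hc
  push_neg at hc
  simp only [Adj, not_or, not_lt] at hc
  have h1 : ∑ e ∈ E.filter (fun e => e.1 = v), x e ≤ 0 := by
    apply Finset.sum_nonpos
    intro e he
    rw [Finset.mem_filter] at he
    have := (hc e.2).1
    rwa [← he.2, Prod.mk.eta] at this
  have h2 : 0 ≤ ∑ e ∈ E.filter (fun e => e.2 = v), x e := by
    apply Finset.sum_nonneg
    intro e he
    rw [Finset.mem_filter] at he
    have := (hc e.1).2
    rwa [← he.2, Prod.mk.eta] at this
  rcases hadj with hpos | hneg
  · -- in-edge (p,v) positive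
    have hmem : (p,v) ∈ E.filter (fun e => e.2 = v) := by
      rw [Finset.mem_filter]
      exact ⟨hsupp _ (ne_of_gt hpos), rfl⟩
    have hle : x (p,v) ≤ ∑ e ∈ E.filter (fun e => e.2 = v), x e := by
      apply Finset.single_le_sum (fun e he => ?_) hmem
      rw [Finset.mem_filter] at he
      have := (hc e.1).2
      rwa [← he.2, Prod.mk.eta] at this
    have hlt : 0 < ∑ e ∈ E.filter (fun e => e.2 = v), x e := lt_of_lt_of_le hpos hle
    have : fOut E x v < 0 := by unfold fOut; linarith
    linarith
  · -- out-edge (v,p) negative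
    have hmem : (v,p) ∈ E.filter (fun e => e.1 = v) := by
      rw [Finset.mem_filter]
      exact ⟨hsupp _ (ne_of_lt hneg), rfl⟩
    have hle : ∑ e ∈ E.filter (fun e => e.1 = v), x e ≤ x (v,p) := by
      have h := Finset.single_le_sum (f := fun e => -x e) (fun e he => ?_) hmem
      · skip
        have hsum : ∑ e ∈ E.filter (fun e => e.1 = v), -x e
            = -∑ e ∈ E.filter (fun e => e.1 = v), x e := by
          rw [Finset.sum_neg_distrib]
        linarith
      · show 0 ≤ -x e
        rw [Finset.mem_filter] at he
        have := (hc e.2).1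
        rw [← he.2, Prod.mk.eta] at this
        linarith
    have : fOut E x v < 0 := by unfold fOut; linarith
    linarith


lemma chain_snoc {R : V → V → Prop} : ∀ (l : List V) (a w : V),
    List.Chain R a l → R (l.getLastD a) w → List.Chain R a (l ++ [w])
  | [], a, w, _, hr => List.Chain.cons hr List.Chain.nil
  | b :: l', a, w, hch, hr => by
    rcases hch with _ | _ | ⟨hab, hch'⟩
    rw [List.getLastD_cons] at hr
    exact List.Chain.cons hab (chain_snoc l' b w hch' hr)

lemma chain_pred {R : V → V → Prop} : ∀ (l : List V) (a : V),
    List.Chain R a l → l ≠ [] → ∃ p, R p (l.getLastD a)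
  | [], a, _, hne => absurd rfl hne
  | [b], a, hch, _ => by
    rcases hch with _ | _ | ⟨hab, _⟩
    exact ⟨a, hab⟩
  | b :: b' :: l', a, hch, _ => by
    rcases hch with _ | _ | ⟨hab, hch'⟩
    rw [List.getLastD_cons]; exact chain_pred (b' :: l') b hch' (by simp)

lemma getLastD_mem : ∀ (l : List V) (a : V), l.getLastD a ∈ a :: l
  | [], a => by simp
  | b :: l', a => by
    simp only [List.getLastD_cons]
    exact List.mem_cons_of_mem a (getLastD_mem l' b)

lemma extract {R : V → V → Prop} : ∀ (l : List V) (a w : V),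
    List.Chain R a l → w ∈ a :: l →
    ∃ l', List.Chain R w l' ∧ (w :: l').Sublist (a :: l) ∧ l'.getLastD w = l.getLastD a
  | l, a, w, hch, hmem => by
    rcases List.mem_cons.1 hmem with h | h
    · subst h; exact ⟨l, hch, List.Sublist.refl _, rfl⟩
    · match l, h with
      | b :: l', h => 
        rcases hch with _ | _ | ⟨hab, hch'⟩
        obtain ⟨l'', h1, h2, h3⟩ := extract l' b w hch' h
        exact ⟨l'', h1, h2.cons _, by rw [List.getLastD_cons]; exact h3⟩

def IsCyc (x : V×V → ℚ) (a : V) (l : List V) : Prop :=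
  List.Chain (Adj x) a l ∧ (a :: l).Nodup ∧ Adj x (l.getLastD a) a

def IsPath (E : Finset (V×V)) (x : V×V → ℚ) (a : V) (l : List V) : Prop :=
  List.Chain (Adj x) a l ∧ (a :: l).Nodup ∧ l ≠ [] ∧
    0 < fOut E x a ∧ fOut E x (l.getLastD a) < 0

def HasStructure (E : Finset (V×V)) (x : V×V → ℚ) : Prop :=
  (∃ a l, IsCyc x a l) ∨ (∃ a l, IsPath E x a l)

lemma walk_rec (E : Finset (V×V)) {x : V×V → ℚ} (hsupp : ∀ e, x e ≠ 0 → e ∈ E) :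
    ∀ (n : ℕ) (a : V) (l : List V),
    List.Chain (Adj x) a l → (a :: l).Nodup →
    Fintype.card V ≤ n + (a :: l).length →
    (0 < fOut E x a ∨ ∀ u, fOut E x u = 0) →
    0 ≤ fOut E x (l.getLastD a) →
    (l ≠ [] ∨ 0 < fOut E x a) →
    HasStructure E x := by
  intro n
  induction n with
  | zero =>
    intro a l hch hnd hcard hinv hlast hcont
    -- find next vertex w
    obtain ⟨w, hw⟩ : ∃ w, Adj x (l.getLastD a) w := by
      rcases hcont with hne | hpos
      · obtain ⟨p, hp⟩ := chain_pred l a hch hne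
        exact step_through E hsupp hp hlast
      · rcases eq_or_ne l [] with rfl | hne
        · exact step_out E hsupp hpos
        · obtain ⟨p, hp⟩ := chain_pred l a hch hne
          exact step_through E hsupp hp hlast
    have hwmem : w ∈ a :: l := by
      by_contra hwn
      have hnd' : (a :: l ++ [w]).Nodup := by
        rw [List.nodup_append]
        exact ⟨hnd, List.nodup_singleton w, fun b hb c hc hbc => hwn (by simp at hc; subst hc; subst hbc; exact hb)⟩
      have := List.Nodup.length_le_card hnd'
      simp at this hcard
      omega
    obtain ⟨l', h1, h2, h3⟩ := extract l a w hch hwmem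
    exact Or.inl ⟨w, l', h1, h2.nodup hnd, (by rw [h3]; exact hw)⟩
  | succ n ih =>
    intro a l hch hnd hcard hinv hlast hcont
    obtain ⟨w, hw⟩ : ∃ w, Adj x (l.getLastD a) w := by
      rcases hcont with hne | hpos
      · obtain ⟨p, hp⟩ := chain_pred l a hch hne
        exact step_through E hsupp hp hlast
      · rcases eq_or_ne l [] with rfl | hne
        · exact step_out E hsupp hpos
        · obtain ⟨p, hp⟩ := chain_pred l a hch hne
          exact step_through E hsupp hp hlast
    by_cases hwmem : w ∈ a :: l
    · obtain ⟨l', h1, h2, h3⟩ := extract l a w hch hwmem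
      exact Or.inl ⟨w, l', h1, h2.nodup hnd, (by rw [h3]; exact hw)⟩
    · have hch2 : List.Chain (Adj x) a (l ++ [w]) := chain_snoc l a w hch hw
      have hnd2 : (a :: (l ++ [w])).Nodup := by
        have : (a :: l ++ [w]).Nodup := by
          rw [List.nodup_append]
          exact ⟨hnd, List.nodup_singleton w, fun b hb c hc hbc => hwmem (by simp at hc; subst hc; subst hbc; exact hb)⟩
        simpa using this
      have hlast2 : (l ++ [w]).getLastD a = w := by simp
      by_cases hneg : fOut E x w < 0
      · -- path found
        have hapos : 0 < fOut E x a := by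
          rcases hinv with h | h
          · exact h
          · exact absurd (h w) (ne_of_lt hneg)
        exact Or.inr ⟨a, l ++ [w], hch2, hnd2, by simp, hapos, (by rw [hlast2]; exact hneg)⟩
      · -- recurse
        apply ih a (l ++ [w]) hch2 hnd2 ?_ hinv (by rw [hlast2]; exact not_lt.1 hneg) (Or.inl (by simp))
        simp at hcard ⊢
        omega

lemma hasStructure_of_ne_zero (E : Finset (V×V)) {x : V×V → ℚ}
    (hsupp : ∀ e, x e ≠ 0 → e ∈ E) (hx : x ≠ 0) : HasStructure E x := by
  by_cases hex : ∃ u, 0 < fOut E x u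
  · obtain ⟨u, hu⟩ := hex
    exact walk_rec E hsupp (Fintype.card V) u []
      List.Chain.nil (by simp) (by simp) (Or.inl hu) (le_of_lt hu) (Or.inr hu)
  · push_neg at hex
    have hall : ∀ u, fOut E x u = 0 := by
      intro u
      have h0 : ∑ v, fOut E x v = 0 := fOut_sum_zero E x
      have := (Finset.sum_eq_zero_iff_of_nonpos (fun v _ => hex v)).1 h0
      exact this u (Finset.mem_univ u)
    obtain ⟨e, he⟩ : ∃ e, x e ≠ 0 := by
      by_contra hc; push_neg at hc
      exact hx (funext fun e => hc e)
    have : ∃ a b, Adj x a b := by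
      rcases lt_or_gt_of_ne he with hneg | hpos
      · exact ⟨e.2, e.1, Or.inr (by rwa [Prod.mk.eta])⟩
      · exact ⟨e.1, e.2, Or.inl (by rwa [Prod.mk.eta])⟩
    obtain ⟨a, b, hab⟩ := this
    rcases eq_or_ne a b with rfl | hne
    · exact Or.inl ⟨a, [], List.Chain.nil, by simp, hab⟩
    · exact walk_rec E hsupp (Fintype.card V) a [b]
        (List.Chain.cons hab List.Chain.nil) (by simp [hne]) (by simp)
        (Or.inr hall) (by simp [hall]) (Or.inl (by simp))


def pairsOf : V → List V → List (V × V)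
  | _, [] => []
  | a, b :: l => (a, b) :: pairsOf b l

def uvecQ (x : V×V → ℚ) (p : V×V) : (V×V) → ℚ :=
  if 0 < x p then (fun e => if e = p then 1 else 0) else (fun e => if e = p.swap then -1 else 0)

def mvec (x : V×V → ℚ) (P : List (V×V)) : (V×V) → ℚ :=
  fun e => (P.map (fun p => uvecQ x p e)).sum

lemma mvec_nil (x : V×V → ℚ) : mvec x [] = fun _ => 0 := rfl

lemma mvec_cons (x : V×V → ℚ) (p : V×V) (P : List (V×V)) :
    mvec x (p :: P) = fun e => uvecQ x p e + mvec x P e := rfl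

lemma pairsOf_mem : ∀ (l : List V) (a : V) (p : V×V), p ∈ pairsOf a l →
    p.1 ∈ a :: l ∧ p.2 ∈ l
  | [], a, p, hp => absurd hp (by simp [pairsOf])
  | b :: l', a, p, hp => by
    rw [pairsOf] at hp
    rcases List.mem_cons.1 hp with h | h
    · subst h; simp
    · have := pairsOf_mem l' b p h
      constructor
      · exact List.mem_cons_of_mem a this.1
      · exact List.mem_cons_of_mem b this.2

lemma pairsOf_nodup : ∀ (l : List V) (a : V), (a :: l).Nodup → (pairsOf a l).Nodup
  | [], a, _ => by simp [pairsOf]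
  | b :: l', a, hnd => by
    rw [pairsOf, List.nodup_cons]
    constructor
    · intro hmem
      have := (pairsOf_mem l' b _ hmem).1
      simp only at this
      have : a ∈ b :: l' := this
      exact (List.nodup_cons.1 hnd).1 this
    · exact pairsOf_nodup l' b (List.nodup_cons.1 hnd).2

lemma pairsOf_adj {x : V×V → ℚ} : ∀ (l : List V) (a : V), List.Chain (Adj x) a l →
    ∀ p ∈ pairsOf a l, Adj x p.1 p.2
  | [], a, _, p, hp => absurd hp (by simp [pairsOf])
  | b :: l', a, hch, p, hp => by
    rcases hch with _ | _ | ⟨hab, hch'⟩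
    rw [pairsOf] at hp
    rcases List.mem_cons.1 hp with h | h
    · subst h; exact hab
    · exact pairsOf_adj l' b hch' p h

lemma uvecQ_swap_neg {x : V×V → ℚ} {p : V×V} (hadj : Adj x p.1 p.2) (hnp : ¬ 0 < x p) :
    x p.swap < 0 := by
  rcases hadj with h | h
  · rw [Prod.mk.eta] at h; exact absurd h hnp
  · exact h

lemma mvec_zero_of {x : V×V → ℚ} (P : List (V×V)) (e : V×V)
    (h : ∀ q ∈ P, uvecQ x q e = 0) : mvec x P e = 0 := by
  apply List.sum_eq_zero
  intro y hy
  obtain ⟨q, hq, rfl⟩ := List.mem_map.1 hy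
  exact h q hq

lemma uvecQ_pos {x : V×V → ℚ} {p : V×V} (hp : 0 < x p) (e : V×V) :
    uvecQ x p e = if e = p then 1 else 0 := by
  unfold uvecQ; rw [if_pos hp]

lemma uvecQ_neg {x : V×V → ℚ} {p : V×V} (hp : ¬ 0 < x p) (e : V×V) :
    uvecQ x p e = if e = p.swap then -1 else 0 := by
  unfold uvecQ; rw [if_neg hp]

lemma mvec_align {x : V×V → ℚ} : ∀ (P : List (V×V)), P.Nodup →
    (∀ p ∈ P, Adj x p.1 p.2) → ∀ e,
    mvec x P e = 0 ∨ (mvec x P e = 1 ∧ 0 < x e) ∨ (mvec x P e = -1 ∧ x e < 0)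
  | [], _, _, e => Or.inl rfl
  | p :: P', hnd, hadj, e => by
    have hndP' := (List.nodup_cons.1 hnd).2
    have hnp : p ∉ P' := (List.nodup_cons.1 hnd).1
    have hadj' : ∀ q ∈ P', Adj x q.1 q.2 := fun q hq => hadj q (List.mem_cons_of_mem p hq)
    have hadjp : Adj x p.1 p.2 := hadj p (List.mem_cons_self)
    rw [mvec_cons]
    simp only
    by_cases hp : 0 < x p
    · by_cases hep : e = p
      · have hz : mvec x P' e = 0 := by
          apply mvec_zero_of
          intro q hq
          by_cases hq2 : 0 < x q
          · rw [uvecQ_pos hq2]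
            simp only [ite_eq_right_iff]
            intro heq
            have hqp : q = p := by rw [← heq, hep]
            exact absurd (hqp ▸ hq) hnp
          · rw [uvecQ_neg hq2]
            simp only [ite_eq_right_iff, neg_eq_zero]
            intro heq
            have hlt := uvecQ_swap_neg (hadj' q hq) hq2
            rw [← heq] at hlt
            subst hep
            exact absurd hp (by linarith)
        rw [hz, uvecQ_pos hp, if_pos hep, hep]
        exact Or.inr (Or.inl ⟨by ring, hp⟩)
      · rw [uvecQ_pos hp, if_neg hep, zero_add]
        exact mvec_align P' hndP' hadj' e
    · have hsw : x p.swap < 0 := uvecQ_swap_neg hadjp hp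
      by_cases hep : e = p.swap
      · have hxe : x e < 0 := by rw [hep]; exact hsw
        have hz : mvec x P' e = 0 := by
          apply mvec_zero_of
          intro q hq
          by_cases hq2 : 0 < x q
          · rw [uvecQ_pos hq2]
            simp only [ite_eq_right_iff]
            intro heq
            rw [heq] at hxe
            exact absurd hq2 (by linarith)
          · rw [uvecQ_neg hq2]
            simp only [ite_eq_right_iff, neg_eq_zero]
            intro heq
            have : q = p := by
              have : e.swap = q := by rw [heq, Prod.swap_swap]
              rw [← this, hep, Prod.swap_swap]
            exact absurd (this ▸ hq) hnp
        rw [hz, uvecQ_neg hp, if_pos hep]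
        exact Or.inr (Or.inr ⟨by ring, hxe⟩)
      · rw [uvecQ_neg hp, if_neg hep, zero_add]
        exact mvec_align P' hndP' hadj' e

lemma mvec_ne_zero {x : V×V → ℚ} (p : V×V) (P' : List (V×V)) (hnd : (p :: P').Nodup)
    (hadj : ∀ q ∈ p :: P', Adj x q.1 q.2) : ∃ e, mvec x (p :: P') e ≠ 0 := by
  have hndP' := (List.nodup_cons.1 hnd).2
  have hnp : p ∉ P' := (List.nodup_cons.1 hnd).1
  have hadj' : ∀ q ∈ P', Adj x q.1 q.2 := fun q hq => hadj q (List.mem_cons_of_mem p hq)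
  have hadjp : Adj x p.1 p.2 := hadj p (List.mem_cons_self)
  by_cases hp : 0 < x p
  · refine ⟨p, ?_⟩
    have hz : mvec x P' p = 0 := by
      apply mvec_zero_of
      intro q hq
      by_cases hq2 : 0 < x q
      · rw [uvecQ_pos hq2]
        simp only [ite_eq_right_iff]
        intro heq; exact absurd (heq ▸ hq) hnp
      · rw [uvecQ_neg hq2]
        simp only [ite_eq_right_iff, neg_eq_zero]
        intro heq
        have hlt := uvecQ_swap_neg (hadj' q hq) hq2
        rw [← heq] at hlt
        exact absurd hp (by linarith)
    rw [mvec_cons]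
    simp only
    rw [hz, uvecQ_pos hp, if_pos rfl]
    norm_num
  · have hsw : x p.swap < 0 := uvecQ_swap_neg hadjp hp
    refine ⟨p.swap, ?_⟩
    have hz : mvec x P' p.swap = 0 := by
      apply mvec_zero_of
      intro q hq
      by_cases hq2 : 0 < x q
      · rw [uvecQ_pos hq2]
        simp only [ite_eq_right_iff]
        intro heq
        rw [heq] at hsw
        exact absurd hq2 (by linarith)
      · rw [uvecQ_neg hq2]
        simp only [ite_eq_right_iff, neg_eq_zero]
        intro heq
        have : q = p := by
          have h1 : p.swap.swap = q := by rw [heq, Prod.swap_swap]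
          rw [Prod.swap_swap] at h1
          exact h1.symm
        exact absurd (this ▸ hq) hnp
    rw [mvec_cons]
    simp only
    rw [hz, uvecQ_neg hp, if_pos rfl]
    norm_num


lemma fOut_congr (E : Finset (V×V)) {f g : V×V → ℚ} (h : ∀ e, f e = g e) (v : V) :
    fOut E f v = fOut E g v := by
  unfold fOut
  rw [Finset.sum_congr rfl (fun e _ => h e), Finset.sum_congr rfl (fun e _ => h e)]

lemma fOut_neg (E : Finset (V×V)) (f : V×V → ℚ) (v : V) :
    fOut E (fun e => - f e) v = - fOut E f v := by
  have := fOut_smul E (-1) f v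
  rw [fOut_congr E (g := fun e => (-1) * f e) (fun e => by ring) v, this]
  ring

lemma fOut_uvecQ (E : Finset (V×V)) {x : V×V → ℚ} (hsupp : ∀ e, x e ≠ 0 → e ∈ E)
    {p : V×V} (hadj : Adj x p.1 p.2) (v : V) :
    fOut E (uvecQ x p) v = (if p.1 = v then 1 else 0) - (if p.2 = v then 1 else 0) := by
  by_cases hp : 0 < x p
  · have hpe : p ∈ E := hsupp p (ne_of_gt hp)
    rw [fOut_congr E (g := fun e => if e = p then (1:ℚ) else 0) (fun e => uvecQ_pos hp e) v]
    exact fOut_single E p hpe v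
  · have hsw : x p.swap < 0 := uvecQ_swap_neg hadj hp
    have hpe : p.swap ∈ E := hsupp p.swap (ne_of_lt hsw)
    rw [fOut_congr E (g := fun e => -(if e = p.swap then (1:ℚ) else 0))
        (fun e => by rw [uvecQ_neg hp]; split <;> rename_i hh <;> simp [hh]) v]
    rw [fOut_neg, fOut_single E p.swap hpe v]
    simp only [Prod.fst_swap, Prod.snd_swap]
    ring

lemma fOut_mvec (E : Finset (V×V)) {x : V×V → ℚ} (hsupp : ∀ e, x e ≠ 0 → e ∈ E) :
    ∀ (P : List (V×V)), (∀ p ∈ P, Adj x p.1 p.2) → ∀ v,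
    fOut E (mvec x P) v
      = (P.map (fun p => (if p.1 = v then (1:ℚ) else 0) - (if p.2 = v then 1 else 0))).sum
  | [], _, v => by
    rw [mvec_nil]
    simp only [List.map_nil, List.sum_nil]
    unfold fOut
    simp
  | p :: P', hadj, v => by
    rw [mvec_cons, fOut_add E (uvecQ x p) (mvec x P') v]
    rw [fOut_uvecQ E hsupp (hadj p (List.mem_cons_self)) v]
    rw [fOut_mvec E hsupp P' (fun q hq => hadj q (List.mem_cons_of_mem p hq)) v]
    simp

lemma pairs_telescope : ∀ (l : List V) (a : V) (v : V),
    ((pairsOf a l).map (fun p => (if p.1 = v then (1:ℚ) else 0) - (if p.2 = v then 1 else 0))).sum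
      = (if a = v then 1 else 0) - (if l.getLastD a = v then 1 else 0)
  | [], a, v => by simp [pairsOf]
  | b :: l', a, v => by
    rw [pairsOf, List.map_cons, List.sum_cons, pairs_telescope l' b v, List.getLastD_cons]
    ring

lemma pairsOf_ne_nil (l : List V) (a : V) (hl : l ≠ []) : pairsOf a l ≠ [] := by
  cases l with
  | nil => exact absurd rfl hl
  | cons b l' => simp [pairsOf]

lemma exists_mvec (E : Finset (V×V)) {x : V×V → ℚ}
    (hsupp : ∀ e, x e ≠ 0 → e ∈ E) (hx : x ≠ 0) :
    ∃ m : V×V → ℚ,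
      (∀ e, m e = 0 ∨ (m e = 1 ∧ 0 < x e) ∨ (m e = -1 ∧ x e < 0)) ∧
      (∃ e, m e ≠ 0) ∧
      ((∀ v, fOut E m v = 0) ∨
        ∃ u t, u ≠ t ∧ 0 < fOut E x u ∧ fOut E x t < 0 ∧
          ∀ v, fOut E m v = (if u = v then 1 else 0) - (if t = v then 1 else 0)) := by
  rcases hasStructure_of_ne_zero E hsupp hx with ⟨a, l, hch, hnd, hclose⟩ | ⟨a, l, hch, hnd, hne, hpos, hneg⟩
  · -- cycle case
    set t := l.getLastD a with ht
    set P := pairsOf a l ++ [(t, a)] with hP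
    have hadjP : ∀ p ∈ P, Adj x p.1 p.2 := by
      intro p hp
      rcases List.mem_append.1 hp with h | h
      · exact pairsOf_adj l a hch p h
      · simp only [List.mem_singleton] at h
        subst h
        exact hclose
    have hndP : P.Nodup := by
      rw [hP, List.nodup_append]
      refine ⟨pairsOf_nodup l a hnd, List.nodup_singleton _, ?_⟩
      intro p hp q hmem hpq
      subst hpq
      simp only [List.mem_singleton] at hmem
      subst hmem
      have h2 := (pairsOf_mem l a _ hp).2
      simp only at h2
      exact (List.nodup_cons.1 hnd).1 h2
    refine ⟨mvec x P, mvec_align P hndP hadjP, ?_, Or.inl ?_⟩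
    · obtain ⟨p, P', hPP⟩ := List.exists_cons_of_ne_nil (by simp [hP] : P ≠ [])
      rw [hPP]
      exact mvec_ne_zero p P' (hPP ▸ hndP) (hPP ▸ hadjP)
    · intro v
      rw [fOut_mvec E hsupp P hadjP v, hP, List.map_append, List.sum_append,
          pairs_telescope l a v]
      simp only [List.map_cons, List.map_nil, List.sum_cons, List.sum_nil]
      ring
  · -- path case
    set t := l.getLastD a with ht
    set P := pairsOf a l with hP
    have hadjP : ∀ p ∈ P, Adj x p.1 p.2 := fun p hp => pairsOf_adj l a hch p hp
    have hndP : P.Nodup := pairsOf_nodup l a hnd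
    refine ⟨mvec x P, mvec_align P hndP hadjP, ?_, Or.inr ⟨a, t, ?_, hpos, hneg, ?_⟩⟩
    · obtain ⟨p, P', hPP⟩ := List.exists_cons_of_ne_nil (pairsOf_ne_nil l a hne)
      rw [hP, hPP]
      exact mvec_ne_zero p P' (hPP ▸ hndP) (hPP ▸ hadjP)
    · intro heq
      rw [heq] at hpos
      linarith
    · intro v
      rw [fOut_mvec E hsupp P hadjP v, hP, pairs_telescope l a v]


section Flows

variable (E : Finset (V×V)) (srcW sinkW : V → ℕ)

lemma isFlow_iff (f : V×V → ℚ) :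
    IsFlow E srcW sinkW f ↔
      ((∀ e, 0 ≤ f e) ∧ (∀ e, e ∉ E → f e = 0) ∧
        ∀ v, -(sinkW v : ℚ) ≤ fOut E f v) := by
  unfold IsFlow exF
  constructor
  · rintro ⟨h1, h2, h3⟩
    refine ⟨h1, h2, fun v => ?_⟩
    have := h3 v
    rw [max_le_iff] at this
    linarith [this.1]
  · rintro ⟨h1, h2, h3⟩
    refine ⟨h1, h2, fun v => ?_⟩
    rw [max_le_iff]
    have := h3 v
    constructor
    · linarith
    · positivity

def Wt (w : V×V → ℕ) (f : V×V → ℚ) : ℚ := ∑ e ∈ E, (w e : ℚ) * f e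

lemma Wt_sub_smul (w : V×V → ℕ) (f m : V×V → ℚ) (θ : ℚ) :
    Wt E w (fun e => f e - θ * m e) = Wt E w f - θ * Wt E w m := by
  unfold Wt
  rw [Finset.mul_sum, ← Finset.sum_sub_distrib]
  apply Finset.sum_congr rfl
  intro e _
  simp only
  ring

lemma Wt_add (w : V×V → ℕ) (f m : V×V → ℚ) :
    Wt E w (fun e => f e + m e) = Wt E w f + Wt E w m := by
  unfold Wt
  rw [← Finset.sum_add_distrib]
  apply Finset.sum_congr rfl
  intro e _
  simp only
  ring

lemma absF_congr {f g : V×V → ℚ} {v : V} (hfg : fOut E f v = fOut E g v) :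
    absF E srcW sinkW f v = absF E srcW sinkW g v := by
  unfold absF
  rw [hfg]

lemma valF_congr {f g : V×V → ℚ} (hfg : ∀ v, fOut E f v = fOut E g v) :
    valF E srcW sinkW f = valF E srcW sinkW g :=
  Finset.sum_congr rfl (fun v _ => absF_congr E srcW sinkW (hfg v))

lemma valF_split {f g : V×V → ℚ} {u t : V} (hut : u ≠ t)
    (hfg : ∀ v, v ≠ u → v ≠ t → fOut E f v = fOut E g v) :
    valF E srcW sinkW f - valF E srcW sinkW g
      = (absF E srcW sinkW f u - absF E srcW sinkW g u)
        + (absF E srcW sinkW f t - absF E srcW sinkW g t) := by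
  unfold valF
  rw [← Finset.sum_sub_distrib]
  rw [← Finset.sum_subset (Finset.subset_univ ({u, t} : Finset V))]
  · rw [Finset.sum_pair hut]
  · intro v _ hv
    simp only [Finset.mem_insert, Finset.mem_singleton, not_or] at hv
    rw [absF_congr E srcW sinkW (hfg v hv.1 hv.2)]
    ring

def fOutZ (g : V×V → ℕ) (v : V) : ℤ :=
  (∑ e ∈ E.filter (fun e => e.1 = v), (g e : ℤ)) - ∑ e ∈ E.filter (fun e => e.2 = v), (g e : ℤ)

lemma fOut_natCast (g : V×V → ℕ) (v : V) :
    fOut E (fun e => (g e : ℚ)) v = ((fOutZ E g v : ℤ) : ℚ) := by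
  unfold fOut fOutZ
  push_cast
  ring

lemma int_step {a b : ℤ} (hab : (a:ℚ) < (b:ℚ)) : (a:ℚ) + 1 ≤ (b:ℚ) := by
  have h1 : a < b := by exact_mod_cast hab
  have h2 : a + 1 ≤ b := h1
  exact_mod_cast h2

end Flows


section Max

variable (E : Finset (V×V)) (srcW sinkW : V → ℕ)

def Phi (w : V×V → ℕ) (h : ℕ) (f : V×V → ℚ) : ℚ :=
  (3*(h:ℚ)+1) * valF E srcW sinkW f - Wt E w f

def Feas (c : V×V → ℕ) (g : V×V → ℕ) : Prop :=
  IsFlow E srcW sinkW (fun e => (g e : ℚ)) ∧ ∀ e, g e ≤ c e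

lemma fOut_zero_fn (v : V) : fOut E (fun _ => (0:ℚ)) v = 0 := by
  unfold fOut; simp

lemma zero_isFlow : IsFlow E srcW sinkW (fun _ => (0:ℚ)) := by
  rw [isFlow_iff]
  refine ⟨fun e => le_refl 0, fun e _ => rfl, fun v => ?_⟩
  rw [fOut_zero_fn]
  simp

lemma exists_max (c w : V×V → ℕ) (h : ℕ) :
    ∃ g : V×V → ℕ, Feas E srcW sinkW c g ∧
      ∀ g', Feas E srcW sinkW c g' →
        Phi E srcW sinkW w h (fun e => (g' e : ℚ)) ≤ Phi E srcW sinkW w h (fun e => (g e : ℚ)) := by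
  classical
  let T : Finset ((V×V) → ℕ) :=
    ((Finset.univ : Finset (∀ e : V×V, Fin (c e + 1))).image
      (fun f e => (f e : ℕ))).filter
      (fun g => IsFlow E srcW sinkW (fun e => (g e : ℚ)))
  have hmem : ∀ g : (V×V) → ℕ, g ∈ T ↔ Feas E srcW sinkW c g := by
    intro g
    simp only [T, Finset.mem_filter, Finset.mem_image, Finset.mem_univ, true_and]
    constructor
    · rintro ⟨⟨f0, hf0⟩, hflow⟩
      refine ⟨hflow, fun e => ?_⟩
      rw [← hf0]
      exact Nat.lt_succ_iff.1 (f0 e).isLt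
    · rintro ⟨hflow, hle⟩
      exact ⟨⟨fun e => ⟨g e, Nat.lt_succ_of_le (hle e)⟩, rfl⟩, hflow⟩
  have hne : T.Nonempty := by
    refine ⟨fun _ => 0, (hmem _).2 ⟨?_, fun e => Nat.zero_le _⟩⟩
    have : (fun (_ : V×V) => ((0:ℕ) : ℚ)) = (fun _ => (0:ℚ)) := by norm_num
    rw [this]
    exact zero_isFlow E srcW sinkW
  obtain ⟨g, hgT, hgmax⟩ :=
    T.exists_max_image (fun g => Phi E srcW sinkW w h (fun e => (g e : ℚ))) hne
  exact ⟨g, (hmem g).1 hgT, fun g' hg' => hgmax g' ((hmem g').2 hg')⟩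

end Max


section Core

variable (E : Finset (V×V)) (srcW sinkW : V → ℕ)

lemma fOut_sub_smul (f m : V×V → ℚ) (θ : ℚ) (v : V) :
    fOut E (fun e => f e - θ * m e) v = fOut E f v - θ * fOut E m v := by
  rw [fOut_sub E f (fun e => θ * m e) v, fOut_smul E θ m v]

lemma min_cast_sub_one (a b : ℤ) :
    min ((a:ℚ) - 1) (b:ℚ) - min (a:ℚ) (b:ℚ) = -(if (a:ℚ) ≤ (b:ℚ) then 1 else 0) := by
  rcases le_or_gt (a:ℚ) (b:ℚ) with hle | hlt
  · rw [if_pos hle, min_eq_left hle, min_eq_left (by linarith)]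
    ring
  · rw [if_neg (not_le.2 hlt)]
    have h1 : (b:ℚ) ≤ (a:ℚ) - 1 := by
      have := int_step hlt
      linarith
    rw [min_eq_right (by linarith), min_eq_right (by linarith)]
    ring

lemma min_cast_add_one (a b : ℤ) :
    min ((a:ℚ) + 1) (b:ℚ) - min (a:ℚ) (b:ℚ) = (if (a:ℚ) < (b:ℚ) then 1 else 0) := by
  rcases lt_or_ge (a:ℚ) (b:ℚ) with hlt | hle
  · have h1 : (a:ℚ) + 1 ≤ (b:ℚ) := int_step hlt
    rw [if_pos hlt, min_eq_left h1, min_eq_left (by linarith)]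
    ring
  · rw [if_neg (not_lt.2 hle), min_eq_right (by linarith), min_eq_right (by linarith)]
    ring

lemma gp_exists (c : V×V → ℕ) (g : V×V → ℕ) (f : V×V → ℚ) (m : V×V → ℚ)
    (hgflow : IsFlow E srcW sinkW (fun e => (g e : ℚ))) (hgc : ∀ e, g e ≤ c e)
    (hf0 : ∀ e, 0 ≤ f e) (hfc : ∀ e, f e ≤ (c e : ℚ))
    (halign : ∀ e, m e = 0 ∨ (m e = 1 ∧ 0 < f e - (g e:ℚ)) ∨ (m e = -1 ∧ f e - (g e:ℚ) < 0))
    (hmE : ∀ e, m e ≠ 0 → e ∈ E) :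
    ∃ gp : V×V → ℕ, (∀ e, (gp e : ℚ) = (g e : ℚ) + m e) ∧ (∀ e, gp e ≤ c e) ∧
      (∀ e, e ∉ E → gp e = 0) := by
  classical
  refine ⟨fun e => if m e = 1 then g e + 1 else if m e = -1 then g e - 1 else g e, ?_, ?_, ?_⟩
  · intro e
    rcases halign e with h0 | ⟨h1, h2⟩ | ⟨h1, h2⟩
    · simp [h0]
    · simp only
      rw [if_pos h1]
      push_cast
      rw [h1]
    · simp only
      rw [if_neg (by rw [h1]; norm_num), if_pos h1]
      have hgpos : 0 < g e := by
        have : (0:ℚ) < (g e : ℚ) := by linarith [hf0 e]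
        exact_mod_cast this
      rw [h1, Nat.cast_sub hgpos]
      push_cast
      ring
  · intro e
    rcases halign e with h0 | ⟨h1, h2⟩ | ⟨h1, h2⟩
    · simp only [h0]
      norm_num
      exact hgc e
    · simp only
      rw [if_pos h1]
      have : (g e : ℚ) < (c e : ℚ) := by linarith [hfc e]
      have : g e < c e := by exact_mod_cast this
      omega
    · simp only
      rw [if_neg (by rw [h1]; norm_num), if_pos h1]
      have := hgc e
      omega
  · intro e he
    have hm0 : m e = 0 := by
      by_contra hc
      exact he (hmE e hc)
    have hg0 : g e = 0 := by
      have := hgflow.2.1 e he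
      simpa using this
    simp [hm0, hg0]

lemma phi_le_of_max (c w : V×V → ℕ) (h : ℕ)
    (g : V×V → ℕ) (hgFeas : Feas E srcW sinkW c g)
    (hmax : ∀ g', Feas E srcW sinkW c g' →
      Phi E srcW sinkW w h (fun e => (g' e : ℚ)) ≤ Phi E srcW sinkW w h (fun e => (g e : ℚ))) :
    ∀ (n : ℕ) (f : V×V → ℚ), IsFlow E srcW sinkW f → (∀ e, f e ≤ (c e : ℚ)) →
      ((Finset.univ.filter (fun e : V×V => f e - (g e:ℚ) ≠ 0)).card
        + (Finset.univ.filter (fun v : V => fOut E (fun e => f e - (g e:ℚ)) v ≠ 0)).card ≤ n) →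
      Phi E srcW sinkW w h f ≤ Phi E srcW sinkW w h (fun e => (g e : ℚ)) := by
  classical
  intro n
  induction n with
  | zero =>
    intro f hflow hcap hmeas
    have hx : ∀ e, f e - (g e:ℚ) = 0 := by
      intro e
      by_contra hc
      have he : e ∈ Finset.univ.filter (fun e : V×V => f e - (g e:ℚ) ≠ 0) := by
        simp [hc]
      have : 0 < (Finset.univ.filter (fun e : V×V => f e - (g e:ℚ) ≠ 0)).card :=
        Finset.card_pos.2 ⟨e, he⟩
      omega
    have hfg : f = fun e => (g e : ℚ) := funext fun e => by linarith [hx e]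
    rw [hfg]
  | succ n ih =>
    intro f hflow hcap hmeas
    by_cases hx0 : ∀ e, f e - (g e:ℚ) = 0
    · have hfg : f = fun e => (g e : ℚ) := funext fun e => by linarith [hx0 e]
      rw [hfg]
    · push_neg at hx0
      set x : V×V → ℚ := fun e => f e - (g e:ℚ) with hxdef
      have hgflow := hgFeas.1
      have hgc := hgFeas.2
      have hgflow' := (isFlow_iff E srcW sinkW _).1 hgflow
      have hflow' := (isFlow_iff E srcW sinkW _).1 hflow
      have hsupp : ∀ e, x e ≠ 0 → e ∈ E := by
        intro e he
        by_contra hc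
        apply he
        have h1 := hflow.2.1 e hc
        have h2 := hgflow.2.1 e hc
        simp only at h2
        simp [hxdef, h1, h2]
      have hxne : x ≠ 0 := by
        obtain ⟨e, he⟩ := hx0
        intro hc
        exact he (congrFun hc e)
      obtain ⟨m, halign, ⟨e₁, hm1⟩, hdiv⟩ := exists_mvec E hsupp hxne
      have hmE : ∀ e, m e ≠ 0 → e ∈ E := by
        intro e he
        rcases halign e with h0 | ⟨h1, h2⟩ | ⟨h1, h2⟩
        · exact absurd h0 he
        · exact hsupp e (ne_of_gt h2)
        · exact hsupp e (ne_of_lt h2)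
      -- the edge-min θ₁
      set S : Finset (V×V) := Finset.univ.filter (fun e => m e ≠ 0) with hSdef
      have hS1 : e₁ ∈ S := by simp [hSdef, hm1]
      have hSne : S.Nonempty := ⟨e₁, hS1⟩
      set θ₁ : ℚ := S.inf' hSne (fun e => |x e|) with hθ₁def
      have hθ₁pos : 0 < θ₁ := by
        rw [hθ₁def, Finset.lt_inf'_iff]
        intro e he
        rw [hSdef, Finset.mem_filter] at he
        rcases halign e with h0 | ⟨h1, h2⟩ | ⟨h1, h2⟩
        · exact absurd h0 he.2
        · rw [abs_pos]; exact ne_of_gt h2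
        · rw [abs_pos]; exact ne_of_lt h2
      have hθ₁le : ∀ e ∈ S, θ₁ ≤ |x e| := fun e he => Finset.inf'_le _ he
      obtain ⟨e₂, he₂S, he₂⟩ := Finset.exists_mem_eq_inf' hSne (fun e => |x e|)
      obtain ⟨gp, hgpcast, hgpc, hgp0⟩ := gp_exists E srcW sinkW c g f m hgflow hgc
        hflow.1 hcap halign hmE
      have hgpOut : ∀ v, fOut E (fun e => (gp e : ℚ)) v
          = fOut E (fun e => (g e : ℚ)) v + fOut E m v := by
        intro v
        rw [fOut_congr E hgpcast v, fOut_add E _ m v]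
      have hWtgp : Wt E w (fun e => (gp e:ℚ)) = Wt E w (fun e => (g e:ℚ)) + Wt E w m := by
        rw [show (fun e => (gp e:ℚ)) = (fun e => (g e:ℚ) + m e) from funext hgpcast,
          Wt_add E w _ m]
      rcases hdiv with hdiv0 | ⟨u, t, hut, hu, ht, hdm⟩
      · -- CYCLE CASE
        have hθle : ∀ e, m e ≠ 0 → θ₁ ≤ |x e| := fun e he => hθ₁le e (by simp [hSdef, he])
        have hgpFeas : Feas E srcW sinkW c gp := by
          constructor
          · rw [isFlow_iff]
            refine ⟨fun e => by positivity, fun e he => by rw [hgp0 e he]; norm_num, fun v => ?_⟩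
            rw [hgpOut v, hdiv0 v, add_zero]
            exact hgflow'.2.2 v
          · exact hgpc
        have hWtm : 0 ≤ Wt E w m := by
          have h1 := hmax gp hgpFeas
          have h2 : valF E srcW sinkW (fun e => (gp e:ℚ)) = valF E srcW sinkW (fun e => (g e:ℚ)) :=
            valF_congr E srcW sinkW (fun v => by rw [hgpOut v, hdiv0 v, add_zero])
          rw [Phi, Phi, h2, hWtgp] at h1
          linarith
        set f2 : V×V → ℚ := fun e => f e - θ₁ * m e with hf2def
        have hf2out : ∀ v, fOut E f2 v = fOut E f v := by
          intro v
          rw [hf2def, fOut_sub_smul E f m θ₁ v, hdiv0 v]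
          ring
        have hf2e : ∀ e, f2 e = f e - θ₁ * m e := fun e => rfl
        have hf2nonneg : ∀ e, 0 ≤ f2 e := by
          intro e
          rcases halign e with h0 | ⟨h1,h2⟩ | ⟨h1,h2⟩
          · rw [hf2e e, h0, mul_zero, sub_zero]; exact hflow.1 e
          · have hle := hθle e (by rw [h1]; norm_num)
            rw [abs_of_pos h2] at hle
            have hg0 : (0:ℚ) ≤ (g e:ℚ) := Nat.cast_nonneg _
            rw [hf2e e, h1, mul_one]
            simp only [hxdef] at hle
            linarith
          · have hle := hθle e (by rw [h1]; norm_num)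
            rw [abs_of_neg h2] at hle
            rw [hf2e e, h1]
            have := hflow.1 e
            linarith
        have hf2cap : ∀ e, f2 e ≤ (c e : ℚ) := by
          intro e
          rcases halign e with h0 | ⟨h1,h2⟩ | ⟨h1,h2⟩
          · rw [hf2e e, h0, mul_zero, sub_zero]; exact hcap e
          · rw [hf2e e, h1, mul_one]
            have := hcap e
            linarith
          · have hle := hθle e (by rw [h1]; norm_num)
            rw [abs_of_neg h2] at hle
            rw [hf2e e, h1]
            have hgce : (g e:ℚ) ≤ (c e:ℚ) := by exact_mod_cast hgc e
            simp only [hxdef] at hle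
            linarith
        have hf2flow : IsFlow E srcW sinkW f2 := by
          rw [isFlow_iff]
          refine ⟨hf2nonneg, fun e he => ?_, fun v => ?_⟩
          · have hm0 : m e = 0 := by
              by_contra hc
              exact he (hmE e hc)
            rw [hf2e e, hm0, mul_zero, sub_zero]
            exact hflow.2.1 e he
          · rw [hf2out v]
            exact hflow'.2.2 v
        have hPhi2 : Phi E srcW sinkW w h f ≤ Phi E srcW sinkW w h f2 := by
          have hval : valF E srcW sinkW f2 = valF E srcW sinkW f :=
            valF_congr E srcW sinkW hf2out
          have hWt : Wt E w f2 = Wt E w f - θ₁ * Wt E w m := Wt_sub_smul E w f m θ₁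
          rw [Phi, Phi, hval, hWt]
          nlinarith [hθ₁pos, hWtm]
        -- measure decrease
        have hx2 : (fun e => f2 e - (g e:ℚ)) = fun e => x e - θ₁ * m e := by
          funext e
          rw [hf2e e, hxdef]
          ring
        have hsubset1 : Finset.univ.filter (fun e : V×V => x e - θ₁ * m e ≠ 0)
            ⊆ Finset.univ.filter (fun e : V×V => x e ≠ 0) := by
          intro e he
          simp only [Finset.mem_filter, Finset.mem_univ, true_and] at he ⊢
          rcases halign e with h0 | ⟨h1,h2⟩ | ⟨h1,h2⟩
          · rw [h0, mul_zero, sub_zero] at he; exact he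
          · exact ne_of_gt h2
          · exact ne_of_lt h2
        have he₂mem : e₂ ∈ Finset.univ.filter (fun e : V×V => x e ≠ 0) := by
          simp only [Finset.mem_filter, Finset.mem_univ, true_and]
          rw [hSdef, Finset.mem_filter] at he₂S
          rcases halign e₂ with h0 | ⟨h1,h2⟩ | ⟨h1,h2⟩
          · exact absurd h0 he₂S.2
          · exact ne_of_gt h2
          · exact ne_of_lt h2
        have he₂not : e₂ ∉ Finset.univ.filter (fun e : V×V => x e - θ₁ * m e ≠ 0) := by
          simp only [Finset.mem_filter, Finset.mem_univ, true_and, not_not]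
          rw [hSdef, Finset.mem_filter] at he₂S
          rcases halign e₂ with h0 | ⟨h1,h2⟩ | ⟨h1,h2⟩
          · exact absurd h0 he₂S.2
          · rw [h1, mul_one, hθ₁def, he₂, abs_of_pos h2]; ring
          · rw [h1, hθ₁def, he₂, abs_of_neg h2]; ring
        have hcard1 : (Finset.univ.filter (fun e : V×V => x e - θ₁ * m e ≠ 0)).card
            < (Finset.univ.filter (fun e : V×V => x e ≠ 0)).card :=
          Finset.card_lt_card ((Finset.ssubset_iff_of_subset hsubset1).2 ⟨e₂, he₂mem, he₂not⟩)
        have hcard2 : (Finset.univ.filter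
              (fun v : V => fOut E (fun e => x e - θ₁ * m e) v ≠ 0)).card
            = (Finset.univ.filter (fun v : V => fOut E x v ≠ 0)).card := by
          congr 1
          apply Finset.filter_congr
          intro v _
          rw [fOut_sub_smul E x m θ₁ v, hdiv0 v]
          simp
        have hx2e : ∀ e, f2 e - (g e:ℚ) = x e - θ₁ * m e := by
          intro e
          simp only [hf2e, hxdef]
          ring
        have hmeas2 : (Finset.univ.filter (fun e : V×V => f2 e - (g e:ℚ) ≠ 0)).card
            + (Finset.univ.filter (fun v : V => fOut E (fun e => f2 e - (g e:ℚ)) v ≠ 0)).card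
            ≤ n := by
          have hfa : Finset.univ.filter (fun e : V×V => f2 e - (g e:ℚ) ≠ 0)
              = Finset.univ.filter (fun e : V×V => x e - θ₁ * m e ≠ 0) :=
            Finset.filter_congr (fun e _ => by rw [hx2e e])
          have hfb : Finset.univ.filter (fun v : V => fOut E (fun e => f2 e - (g e:ℚ)) v ≠ 0)
              = Finset.univ.filter (fun v : V => fOut E (fun e => x e - θ₁ * m e) v ≠ 0) :=
            Finset.filter_congr (fun v _ => by rw [fOut_congr E hx2e v])
          have hm1' : Finset.univ.filter (fun e : V×V => f e - (g e:ℚ) ≠ 0)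
              = Finset.univ.filter (fun e : V×V => x e ≠ 0) :=
            Finset.filter_congr (fun e _ => by rw [hxdef])
          rw [hm1'] at hmeas
          rw [hfa, hfb]
          omega
        exact le_trans hPhi2 (ih f2 hf2flow hf2cap hmeas2)
      · -- PATH CASE
        have hθle' : ∀ e, m e ≠ 0 → θ₁ ≤ |x e| := fun e he => hθ₁le e (by simp [hSdef, he])
        set θ : ℚ := min θ₁ (min (fOut E x u) (-(fOut E x t))) with hθdef
        have hθpos : 0 < θ := by
          rw [hθdef, lt_min_iff, lt_min_iff]
          exact ⟨hθ₁pos, hu, by linarith⟩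
        have hθle : ∀ e, m e ≠ 0 → θ ≤ |x e| :=
          fun e he => le_trans (min_le_left _ _) (hθle' e he)
        have hθu : θ ≤ fOut E x u := le_trans (min_le_right _ _) (min_le_left _ _)
        have hθt : θ ≤ -(fOut E x t) := le_trans (min_le_right _ _) (min_le_right _ _)
        have hxout : ∀ v, fOut E x v = fOut E f v - fOut E (fun e => (g e:ℚ)) v := by
          intro v
          rw [hxdef, fOut_sub E f _ v]
        have htu : ¬ (t = u) := fun hh => hut hh.symm
        -- integer abbreviations
        set au : ℤ := (srcW u : ℤ) - fOutZ E g u with haudef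
        set at' : ℤ := (srcW t : ℤ) - fOutZ E g t with hatdef
        set bu : ℤ := (sinkW u : ℤ) with hbudef
        set bt : ℤ := (sinkW t : ℤ) with hbtdef
        set χu : ℚ := if (au:ℚ) ≤ (bu:ℚ) then 1 else 0 with hχudef
        set χt : ℚ := if (at':ℚ) < (bt:ℚ) then 1 else 0 with hχtdef
        have hAu : (srcW u:ℚ) - fOut E (fun e => (g e:ℚ)) u = (au:ℚ) := by
          rw [fOut_natCast, haudef]; push_cast; ring
        have hAt : (srcW t:ℚ) - fOut E (fun e => (g e:ℚ)) t = (at':ℚ) := by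
          rw [fOut_natCast, hatdef]; push_cast; ring
        have hBu : (sinkW u:ℚ) = (bu:ℚ) := by rw [hbudef]; push_cast; ring
        have hBt : (sinkW t:ℚ) = (bt:ℚ) := by rw [hbtdef]; push_cast; ring
        -- feasibility of gp
        have hgpFeas : Feas E srcW sinkW c gp := by
          constructor
          · rw [isFlow_iff]
            refine ⟨fun e => by positivity, fun e he => by rw [hgp0 e he]; norm_num, fun v => ?_⟩
            rw [hgpOut v, hdm v]
            by_cases hvt : t = v
            · subst hvt
              rw [if_neg (fun hh => hut hh), if_pos rfl]
              have h1 : -(sinkW t:ℚ) ≤ fOut E f t := hflow'.2.2 t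
              have h2 : fOut E f t < fOut E (fun e => (g e:ℚ)) t := by
                have := hxout t
                linarith
              have h3 : (((-(sinkW t:ℤ)) : ℤ):ℚ) < ((fOutZ E g t : ℤ):ℚ) := by
                rw [← fOut_natCast]
                push_cast
                linarith
              have h4 := int_step h3
              rw [fOut_natCast E g t]
              push_cast at h4 ⊢
              linarith
            · rw [if_neg hvt]
              have := hgflow'.2.2 v
              split <;> linarith
          · exact hgpc
        -- value change for gp
        have houtgp_other : ∀ v, v ≠ u → v ≠ t →
            fOut E (fun e => (gp e:ℚ)) v = fOut E (fun e => (g e:ℚ)) v := by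
          intro v hvu hvt
          rw [hgpOut v, hdm v, if_neg (fun hh => hvu hh.symm), if_neg (fun hh => hvt hh.symm)]
          ring
        have hsplitg := valF_split E srcW sinkW (f := fun e => (gp e:ℚ)) (g := fun e => (g e:ℚ))
          hut houtgp_other
        have hdiffu : absF E srcW sinkW (fun e => (gp e:ℚ)) u
            - absF E srcW sinkW (fun e => (g e:ℚ)) u = -χu := by
          unfold absF
          rw [hgpOut u, hdm u, if_pos rfl, if_neg htu]
          have e1 : (srcW u:ℚ) - (fOut E (fun e => (g e:ℚ)) u + (1 - 0)) = (au:ℚ) - 1 := by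
            rw [← hAu]; ring
          rw [e1, hAu, hBu, min_cast_sub_one au bu, hχudef]
        have hdifft : absF E srcW sinkW (fun e => (gp e:ℚ)) t
            - absF E srcW sinkW (fun e => (g e:ℚ)) t = χt := by
          unfold absF
          rw [hgpOut t, hdm t, if_neg (fun hh => hut hh), if_pos rfl]
          have e1 : (srcW t:ℚ) - (fOut E (fun e => (g e:ℚ)) t + (0 - 1)) = (at':ℚ) + 1 := by
            rw [← hAt]; ring
          rw [e1, hAt, hBt, min_cast_add_one at' bt, hχtdef]
        have hkey : (3*(h:ℚ)+1) * (χt - χu) ≤ Wt E w m := by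
          have h1 := hmax gp hgpFeas
          rw [Phi, Phi, hWtgp] at h1
          have h2 : valF E srcW sinkW (fun e => (gp e:ℚ))
              = valF E srcW sinkW (fun e => (g e:ℚ)) + (χt - χu) := by
            have := hsplitg
            rw [hdiffu, hdifft] at this
            linarith
          rw [h2] at h1
          nlinarith [h1]
        -- the new fractional flow f2
        set f2 : V×V → ℚ := fun e => f e - θ * m e with hf2def
        have hf2e : ∀ e, f2 e = f e - θ * m e := fun e => rfl
        have hf2out : ∀ v, fOut E f2 v
            = fOut E f v - θ * ((if u = v then 1 else 0) - (if t = v then 1 else 0)) := by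
          intro v
          rw [hf2def, fOut_sub_smul E f m θ v, hdm v]
        have hf2out_other : ∀ v, v ≠ u → v ≠ t → fOut E f2 v = fOut E f v := by
          intro v hvu hvt
          rw [hf2out v, if_neg (fun hh => hvu hh.symm), if_neg (fun hh => hvt hh.symm)]
          ring
        have hf2outu : fOut E f2 u = fOut E f u - θ := by
          rw [hf2out u, if_pos rfl, if_neg htu]; ring
        have hf2outt : fOut E f2 t = fOut E f t + θ := by
          rw [hf2out t, if_neg (fun hh => hut hh), if_pos rfl]; ring
        have hf2nonneg : ∀ e, 0 ≤ f2 e := by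
          intro e
          rcases halign e with h0 | ⟨h1,h2⟩ | ⟨h1,h2⟩
          · rw [hf2e e, h0, mul_zero, sub_zero]; exact hflow.1 e
          · have hle := hθle e (by rw [h1]; norm_num)
            rw [abs_of_pos h2] at hle
            have hg0 : (0:ℚ) ≤ (g e:ℚ) := Nat.cast_nonneg _
            rw [hf2e e, h1, mul_one]
            simp only [hxdef] at hle
            linarith
          · have hle := hθle e (by rw [h1]; norm_num)
            rw [abs_of_neg h2] at hle
            rw [hf2e e, h1]
            have := hflow.1 e
            linarith
        have hf2cap : ∀ e, f2 e ≤ (c e : ℚ) := by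
          intro e
          rcases halign e with h0 | ⟨h1,h2⟩ | ⟨h1,h2⟩
          · rw [hf2e e, h0, mul_zero, sub_zero]; exact hcap e
          · rw [hf2e e, h1, mul_one]
            have := hcap e
            linarith
          · have hle := hθle e (by rw [h1]; norm_num)
            rw [abs_of_neg h2] at hle
            rw [hf2e e, h1]
            have hgce : (g e:ℚ) ≤ (c e:ℚ) := by exact_mod_cast hgc e
            simp only [hxdef] at hle
            linarith
        have hf2flow : IsFlow E srcW sinkW f2 := by
          rw [isFlow_iff]
          refine ⟨hf2nonneg, fun e he => ?_, fun v => ?_⟩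
          · have hm0 : m e = 0 := by
              by_contra hc
              exact he (hmE e hc)
            rw [hf2e e, hm0, mul_zero, sub_zero]
            exact hflow.2.1 e he
          · by_cases hvu : v = u
            · subst hvu
              rw [hf2outu]
              have h1 := hgflow'.2.2 v
              have h2 := hxout v
              linarith
            · by_cases hvt : v = t
              · subst hvt
                rw [hf2outt]
                have := hflow'.2.2 v
                linarith
              · rw [hf2out_other v hvu hvt]
                exact hflow'.2.2 v
        -- value inequality for f2
        have hsplitf := valF_split E srcW sinkW (f := f2) (g := f) hut
          (fun v hvu hvt => hf2out_other v hvu hvt)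
        have hdfu : absF E srcW sinkW f2 u - absF E srcW sinkW f u ≥ θ * χu := by
          unfold absF
          rw [hf2outu]
          rcases le_or_gt (au:ℚ) (bu:ℚ) with hcase | hcase
          · rw [hχudef, if_pos hcase]
            have hAfu : (srcW u:ℚ) - fOut E f u = (au:ℚ) - fOut E x u := by
              have := hxout u
              linarith [hAu]
            have h1 : (srcW u:ℚ) - fOut E f u ≤ (bu:ℚ) - θ := by
              rw [hAfu]
              linarith [hθu]
            have h2 : (srcW u:ℚ) - (fOut E f u - θ) ≤ (sinkW u:ℚ) := by
              rw [hBu]; linarith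
            rw [min_eq_left h2, min_eq_left (by rw [hBu]; linarith)]
            linarith
          · rw [hχudef, if_neg (not_le.2 hcase), mul_zero]
            have := min_le_min (show (srcW u:ℚ) - fOut E f u ≤ (srcW u:ℚ) - (fOut E f u - θ) by linarith)
              (le_refl (sinkW u:ℚ))
            linarith
        have hdft : absF E srcW sinkW f2 t - absF E srcW sinkW f t ≥ -(θ * χt) := by
          unfold absF
          rw [hf2outt]
          rcases lt_or_ge (at':ℚ) (bt:ℚ) with hcase | hcase
          · rw [hχtdef, if_pos hcase, mul_one]
            have h1 : min ((srcW t:ℚ) - fOut E f t - θ) ((sinkW t:ℚ) - θ)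
                ≤ min ((srcW t:ℚ) - (fOut E f t + θ)) ((sinkW t:ℚ)) := by
              apply min_le_min
              · linarith
              · linarith
            have h2 : min ((srcW t:ℚ) - fOut E f t - θ) ((sinkW t:ℚ) - θ)
                = min ((srcW t:ℚ) - fOut E f t) ((sinkW t:ℚ)) - θ := by
              rw [← min_sub_sub_right]
            linarith
          · rw [hχtdef, if_neg (not_lt.2 hcase), mul_zero, neg_zero]
            have hAft : (srcW t:ℚ) - fOut E f t = (at':ℚ) - fOut E x t := by
              have := hxout t
              linarith [hAt]
            have h1 : (sinkW t:ℚ) + θ ≤ (srcW t:ℚ) - fOut E f t := by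
              rw [hAft, hBt] at *
              linarith [hθt]
            rw [min_eq_right (by linarith), min_eq_right (by rw [hBt]; linarith)]
            linarith
        have hvalf2 : valF E srcW sinkW f2 - valF E srcW sinkW f ≥ θ * χu - θ * χt := by
          rw [hsplitf]
          linarith
        have hPhi2 : Phi E srcW sinkW w h f ≤ Phi E srcW sinkW w h f2 := by
          have hWt : Wt E w f2 = Wt E w f - θ * Wt E w m := Wt_sub_smul E w f m θ
          rw [Phi, Phi, hWt]
          have hmul := mul_le_mul_of_nonneg_left hkey (le_of_lt hθpos)
          have h3h : (0:ℚ) ≤ 3*(h:ℚ)+1 := by positivity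
          have hA := mul_le_mul_of_nonneg_left hvalf2 h3h
          ring_nf at hA hmul ⊢
          linarith
        -- measure decrease
        have hx2e : ∀ e, f2 e - (g e:ℚ) = x e - θ * m e := by
          intro e
          simp only [hf2e, hxdef]
          ring
        have hxout2 : ∀ v, fOut E (fun e => x e - θ * m e) v
            = fOut E x v - θ * ((if u = v then 1 else 0) - (if t = v then 1 else 0)) := by
          intro v
          rw [fOut_sub_smul E x m θ v, hdm v]
        have hsubset1 : Finset.univ.filter (fun e : V×V => x e - θ * m e ≠ 0)
            ⊆ Finset.univ.filter (fun e : V×V => x e ≠ 0) := by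
          intro e he
          simp only [Finset.mem_filter, Finset.mem_univ, true_and] at he ⊢
          rcases halign e with h0 | ⟨h1,h2⟩ | ⟨h1,h2⟩
          · rw [h0, mul_zero, sub_zero] at he; exact he
          · exact ne_of_gt h2
          · exact ne_of_lt h2
        have hsubset2 : Finset.univ.filter (fun v : V => fOut E (fun e => x e - θ * m e) v ≠ 0)
            ⊆ Finset.univ.filter (fun v : V => fOut E x v ≠ 0) := by
          intro v hv
          simp only [Finset.mem_filter, Finset.mem_univ, true_and] at hv ⊢
          by_cases hvu : v = u
          · subst hvu; exact ne_of_gt hu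
          · by_cases hvt : v = t
            · subst hvt; exact ne_of_lt ht
            · rw [hxout2 v, if_neg (fun hh => hvu hh.symm), if_neg (fun hh => hvt hh.symm)] at hv
              intro hc
              apply hv
              rw [hc]
              ring
        have hm1' : Finset.univ.filter (fun e : V×V => f e - (g e:ℚ) ≠ 0)
            = Finset.univ.filter (fun e : V×V => x e ≠ 0) :=
          Finset.filter_congr (fun e _ => by rw [hxdef])
        have hfa : Finset.univ.filter (fun e : V×V => f2 e - (g e:ℚ) ≠ 0)
            = Finset.univ.filter (fun e : V×V => x e - θ * m e ≠ 0) :=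
          Finset.filter_congr (fun e _ => by rw [hx2e e])
        have hfb : Finset.univ.filter (fun v : V => fOut E (fun e => f2 e - (g e:ℚ)) v ≠ 0)
            = Finset.univ.filter (fun v : V => fOut E (fun e => x e - θ * m e) v ≠ 0) :=
          Finset.filter_congr (fun v _ => by rw [fOut_congr E hx2e v])
        have hstrict : (Finset.univ.filter (fun e : V×V => x e - θ * m e ≠ 0)).card
              + (Finset.univ.filter (fun v : V => fOut E (fun e => x e - θ * m e) v ≠ 0)).card
            < (Finset.univ.filter (fun e : V×V => x e ≠ 0)).card
              + (Finset.univ.filter (fun v : V => fOut E x v ≠ 0)).card := by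
          have hcard1le := Finset.card_le_card hsubset1
          have hcard2le := Finset.card_le_card hsubset2
          rcases min_cases θ₁ (min (fOut E x u) (-(fOut E x t))) with ⟨heq, _⟩ | ⟨heq, hle2⟩
          · -- θ = θ₁ : an edge drops out of the support
            have hθeq : θ = θ₁ := by rw [hθdef, heq]
            have he₂mem : e₂ ∈ Finset.univ.filter (fun e : V×V => x e ≠ 0) := by
              simp only [Finset.mem_filter, Finset.mem_univ, true_and]
              rw [hSdef, Finset.mem_filter] at he₂S
              rcases halign e₂ with h0 | ⟨h1,h2⟩ | ⟨h1,h2⟩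
              · exact absurd h0 he₂S.2
              · exact ne_of_gt h2
              · exact ne_of_lt h2
            have he₂not : e₂ ∉ Finset.univ.filter (fun e : V×V => x e - θ * m e ≠ 0) := by
              simp only [Finset.mem_filter, Finset.mem_univ, true_and, not_not]
              rw [hSdef, Finset.mem_filter] at he₂S
              rcases halign e₂ with h0 | ⟨h1,h2⟩ | ⟨h1,h2⟩
              · exact absurd h0 he₂S.2
              · rw [h1, mul_one, hθeq, hθ₁def, he₂, abs_of_pos h2]; ring
              · rw [h1, hθeq, hθ₁def, he₂, abs_of_neg h2]; ring
            have := Finset.card_lt_card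
              ((Finset.ssubset_iff_of_subset hsubset1).2 ⟨e₂, he₂mem, he₂not⟩)
            omega
          · -- θ = min of the two vertex quantities
            rcases min_cases (fOut E x u) (-(fOut E x t)) with ⟨heq2, _⟩ | ⟨heq2, _⟩
            · -- θ = fOut x u : u drops out of the divergence set
              have hθeq : θ = fOut E x u := by rw [hθdef, heq, heq2]
              have humem : u ∈ Finset.univ.filter (fun v : V => fOut E x v ≠ 0) := by
                simp only [Finset.mem_filter, Finset.mem_univ, true_and]
                exact ne_of_gt hu
              have hunot : u ∉ Finset.univ.filter
                  (fun v : V => fOut E (fun e => x e - θ * m e) v ≠ 0) := by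
                simp only [Finset.mem_filter, Finset.mem_univ, true_and, not_not]
                rw [hxout2 u, if_pos rfl, if_neg htu, hθeq]
                ring
              have := Finset.card_lt_card
                ((Finset.ssubset_iff_of_subset hsubset2).2 ⟨u, humem, hunot⟩)
              omega
            · -- θ = -(fOut x t) : t drops out of the divergence set
              have hθeq : θ = -(fOut E x t) := by rw [hθdef, heq, heq2]
              have htmem : t ∈ Finset.univ.filter (fun v : V => fOut E x v ≠ 0) := by
                simp only [Finset.mem_filter, Finset.mem_univ, true_and]
                exact ne_of_lt ht
              have htnot : t ∉ Finset.univ.filter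
                  (fun v : V => fOut E (fun e => x e - θ * m e) v ≠ 0) := by
                simp only [Finset.mem_filter, Finset.mem_univ, true_and, not_not]
                rw [hxout2 t, if_neg (fun hh => hut hh), if_pos rfl, hθeq]
                ring
              have := Finset.card_lt_card
                ((Finset.ssubset_iff_of_subset hsubset2).2 ⟨t, htmem, htnot⟩)
              omega
        have hmeas2 : (Finset.univ.filter (fun e : V×V => f2 e - (g e:ℚ) ≠ 0)).card
            + (Finset.univ.filter (fun v : V => fOut E (fun e => f2 e - (g e:ℚ)) v ≠ 0)).card
            ≤ n := by
          rw [hm1'] at hmeas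
          rw [hfa, hfb]
          omega
        exact le_trans hPhi2 (ih f2 hf2flow hf2cap hmeas2)

lemma val_zero_nonneg : 0 ≤ valF E srcW sinkW (fun _ => (0:ℚ)) := by
  apply Finset.sum_nonneg
  intro v _
  unfold absF
  rw [fOut_zero_fn]
  apply le_min <;> [skip; positivity]
  have : (0:ℚ) ≤ (srcW v : ℚ) := by positivity
  linarith

end Core

end Stmt9

/-- If there is a (possibly fractional) feasible `(Δ,∇)`-flow `f*` with
`w(f*) ≤ |f*|·h`, then there is an *integral* feasible `(Δ,∇)`-flow `f` with
`|f| ≥ (1/6)·|f*|` and `w(f) ≤ 9h·|f|`. -/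
theorem stmt_9 {V : Type*} [Fintype V] [DecidableEq V]
    (E : Finset (V × V)) (c : V × V → ℕ) (srcW sinkW : V → ℕ)
    (w : V × V → ℕ) (hw : ∀ e ∈ E, 1 ≤ w e) (h : ℕ)
    (fstar : V × V → ℚ)
    (hfstar : IsFlow E srcW sinkW fstar)
    (hfstarFeas : ∀ e ∈ E, fstar e ≤ (c e : ℚ))
    (hfstarShort : ∑ e ∈ E, (w e : ℚ) * fstar e ≤ valF E srcW sinkW fstar * (h : ℚ)) :
    ∃ f : V × V → ℕ,
      IsFlow E srcW sinkW (fun e => (f e : ℚ)) ∧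
      (∀ e ∈ E, f e ≤ c e) ∧
      (1 / 6) * valF E srcW sinkW fstar ≤ valF E srcW sinkW (fun e => (f e : ℚ)) ∧
      ∑ e ∈ E, (w e : ℚ) * (f e : ℚ) ≤
        9 * (h : ℚ) * valF E srcW sinkW (fun e => (f e : ℚ)) := by
  classical
  open Stmt9 in
  have hcast0 : (fun e : V×V => (((fun _ => (0:ℕ)) e : ℕ) : ℚ)) = (fun _ : V×V => (0:ℚ)) := by
    funext e; norm_num
  rcases Nat.eq_zero_or_pos h with h0 | hpos
  · -- h = 0 case
    subst h0
    have hsum0 : ∑ e ∈ E, (w e : ℚ) * fstar e = 0 := by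
      apply le_antisymm
      · simpa using hfstarShort
      · apply Finset.sum_nonneg
        intro e _
        exact mul_nonneg (by positivity) (hfstar.1 e)
    have hterm : ∀ e ∈ E, (w e : ℚ) * fstar e = 0 := by
      intro e he
      have := (Finset.sum_eq_zero_iff_of_nonneg
        (fun e _ => mul_nonneg (by positivity) (hfstar.1 e))).1 hsum0
      exact this e he
    have hstar0 : ∀ e, fstar e = 0 := by
      intro e
      by_cases heE : e ∈ E
      · have h1 := hterm e heE
        have hw1 : (1:ℚ) ≤ (w e : ℚ) := by exact_mod_cast hw e heE
        rcases mul_eq_zero.1 h1 with h2 | h2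
        · linarith
        · exact h2
      · exact hfstar.2.1 e heE
    set z : V×V → ℕ := fun _ => 0 with hz
    have hzcast : (fun e : V×V => ((z e : ℕ) : ℚ)) = (fun _ : V×V => (0:ℚ)) := by
      funext e; rw [hz]; norm_num
    refine ⟨z, ?_, fun e _ => Nat.zero_le _, ?_, ?_⟩
    · rw [hzcast]
      exact Stmt9.zero_isFlow E srcW sinkW
    · have hveq : valF E srcW sinkW fstar
          = valF E srcW sinkW (fun e : V×V => ((z e : ℕ) : ℚ)) := by
        apply Stmt9.valF_congr
        intro v
        apply Stmt9.fOut_congr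
        intro e
        rw [hstar0 e, hz]
        norm_num
      have hnn : 0 ≤ valF E srcW sinkW (fun e : V×V => ((z e : ℕ) : ℚ)) := by
        rw [hzcast]
        exact Stmt9.val_zero_nonneg E srcW sinkW
      rw [hveq]
      calc (1/6 : ℚ) * valF E srcW sinkW (fun e : V×V => ((z e : ℕ) : ℚ))
          ≤ 1 * valF E srcW sinkW (fun e : V×V => ((z e : ℕ) : ℚ)) :=
            mul_le_mul_of_nonneg_right (by norm_num) hnn
        _ = _ := one_mul _
    · have : ∀ e ∈ E, (w e : ℚ) * ((z e : ℕ) : ℚ) = 0 := by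
        intro e _
        rw [hz]
        norm_num
      rw [Finset.sum_congr rfl this]
      rw [Finset.sum_const, smul_zero]
      norm_num
  · -- h ≥ 1 case
    have hc1 : (1:ℚ) ≤ (h:ℚ) := by exact_mod_cast hpos
    have hh0 : (0:ℚ) ≤ (h:ℚ) := by positivity
    obtain ⟨g, hgFeas, hmax⟩ := Stmt9.exists_max E srcW sinkW c w h
    have hfscap : ∀ e, fstar e ≤ (c e : ℚ) := by
      intro e
      by_cases heE : e ∈ E
      · exact hfstarFeas e heE
      · rw [hfstar.2.1 e heE]; positivity
    have hmeas : (Finset.univ.filter (fun e : V×V => fstar e - (g e:ℚ) ≠ 0)).card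
        + (Finset.univ.filter (fun v : V => fOut E (fun e => fstar e - (g e:ℚ)) v ≠ 0)).card
        ≤ Fintype.card (V×V) + Fintype.card V := by
      have h1 := Finset.card_filter_le (Finset.univ : Finset (V×V))
        (fun e : V×V => fstar e - (g e:ℚ) ≠ 0)
      have h2 := Finset.card_filter_le (Finset.univ : Finset V)
        (fun v : V => fOut E (fun e => fstar e - (g e:ℚ)) v ≠ 0)
      rw [Finset.card_univ] at h1 h2
      omega
    have hPhi := Stmt9.phi_le_of_max E srcW sinkW c w h g hgFeas hmax
      (Fintype.card (V×V) + Fintype.card V) fstar hfstar hfscap hmeas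
    -- zero flow gives Phi g ≥ 0
    have hzFeas : Stmt9.Feas E srcW sinkW c (fun _ => 0) := by
      refine ⟨?_, fun e => Nat.zero_le _⟩
      rw [show (fun e : V×V => (((fun _ => (0:ℕ)) e : ℕ) : ℚ)) = (fun _ : V×V => (0:ℚ)) from hcast0]
      exact Stmt9.zero_isFlow E srcW sinkW
    have hPhi0 := hmax _ hzFeas
    have hval0 : 0 ≤ valF E srcW sinkW (fun e : V×V => (((fun _ => (0:ℕ)) e : ℕ) : ℚ)) := by
      rw [show (fun e : V×V => (((fun _ => (0:ℕ)) e : ℕ) : ℚ)) = (fun _ : V×V => (0:ℚ)) from hcast0]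
      exact Stmt9.val_zero_nonneg E srcW sinkW
    have hWt0 : Stmt9.Wt E w (fun e : V×V => (((fun _ => (0:ℕ)) e : ℕ) : ℚ)) = 0 := by
      unfold Stmt9.Wt
      apply Finset.sum_eq_zero
      intro e _
      norm_num
    have hPhig0 : 0 ≤ Stmt9.Phi E srcW sinkW w h (fun e => (g e : ℚ)) := by
      have : 0 ≤ Stmt9.Phi E srcW sinkW w h (fun e : V×V => (((fun _ => (0:ℕ)) e : ℕ) : ℚ)) := by
        unfold Stmt9.Phi
        rw [hWt0]
        have : (0:ℚ) ≤ 3*(h:ℚ)+1 := by positivity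
        nlinarith [hval0]
      exact le_trans this hPhi0
    have hWtg0 : 0 ≤ Stmt9.Wt E w (fun e => (g e : ℚ)) := by
      apply Finset.sum_nonneg
      intro e _
      positivity
    have hWtstar : Stmt9.Wt E w fstar ≤ valF E srcW sinkW fstar * (h:ℚ) := hfstarShort
    have hWtstar0 : 0 ≤ Stmt9.Wt E w fstar := by
      apply Finset.sum_nonneg
      intro e _
      exact mul_nonneg (by positivity) (hfstar.1 e)
    have hvalstar0 : 0 ≤ valF E srcW sinkW fstar := by
      by_contra hcon
      push_neg at hcon
      nlinarith [hWtstar, hWtstar0]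
    set valg := valF E srcW sinkW (fun e => (g e : ℚ)) with hvalgdef
    set valstar := valF E srcW sinkW fstar with hvalstardef
    set Wtg := Stmt9.Wt E w (fun e => (g e : ℚ)) with hWtgdef
    have hPhiIneq : (3*(h:ℚ)+1) * valstar - Stmt9.Wt E w fstar ≤ (3*(h:ℚ)+1) * valg - Wtg := hPhi
    have hvalg0 : 0 ≤ valg := by
      have h1 : 0 ≤ (3*(h:ℚ)+1) * valg - Wtg := hPhig0
      nlinarith [hWtg0]
    have k1 : (2*(h:ℚ)+1) * valstar ≤ (3*(h:ℚ)+1) * valg := by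
      nlinarith [hPhiIneq, hWtstar, hWtg0]
    refine ⟨g, hgFeas.1, fun e _ => hgFeas.2 e, ?_, ?_⟩
    · -- value bound
      by_contra hcon
      push_neg at hcon
      have h2 : (3*(h:ℚ)+1) * valg < (3*(h:ℚ)+1) * ((1/6) * valstar) :=
        mul_lt_mul_of_pos_left hcon (by positivity)
      have h3 : (3*(h:ℚ)+1) * ((1/6) * valstar) ≤ (2*(h:ℚ)+1) * valstar := by
        nlinarith [hvalstar0, mul_nonneg hh0 hvalstar0]
      linarith [k1]
    · -- weight bound
      have hWle : Wtg ≤ (3*(h:ℚ)+1) * valg := by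
        have h1 : 0 ≤ (3*(h:ℚ)+1) * valg - Wtg := hPhig0
        linarith
      have hprod : 0 ≤ (6*(h:ℚ)-1) * valg :=
        mul_nonneg (by linarith) hvalg0
      have hgoal : Wtg ≤ 9 * (h:ℚ) * valg := by nlinarith
      exact hgoal
end

section
/- Let (G, c_G) be a capacitated directed graph, F ⊆ E, and suppose (W, c, r, Π) is an (R, φ, ψ)-witness of (G, c_G, F) with respect to some γ. Then G contains no cut S that is both (2R/ψ)-balanced and (φψ²/2)-sparse with respect to F; i.e., there is no S ⊆ V with min{vol_{F,c_G}(S), vol_{F,c_G}(S̄)} ≥ 2R/ψ and min{c_G(E_G(S,S̄)), c_G(E_G(S̄,S))} < (φψ²/2)·min{vol_{F,c_G}(S), vol_{F,c_G}(S̄)}. -/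
open Finset

/-- Sum of capacities of edges of `F` incident to `v` (counting in- and out-edges). -/
def degCap {V : Type*} [DecidableEq V] (F : Finset (V × V)) (c : V × V → ℕ) (v : V) : ℕ :=
  (∑ e ∈ F.filter (fun e => e.1 = v), c e) + ∑ e ∈ F.filter (fun e => e.2 = v), c e

/-- `F`-volume of a vertex set. -/
def volCap {V : Type*} [DecidableEq V] (F : Finset (V × V)) (c : V × V → ℕ) (S : Finset V) : ℕ :=
  ∑ v ∈ S, degCap F c v

/-- Total capacity of the edges going from `A` to `B`. -/
def cutCap {V : Type*} [DecidableEq V] (E : Finset (V × V)) (c : V × V → ℕ)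
    (A B : Finset V) : ℕ :=
  ∑ e ∈ E.filter (fun e => e.1 ∈ A ∧ e.2 ∈ B), c e

/-- `(W, c, r, emb)` is an `(R, φ, ψ)`-witness of `(G, c_G, F)` with respect to `γ`:
(1) `‖r‖₁ ≤ R`; (2) `deg_{F,c_G} ≤ deg_{W,c} + r ≤ (1/ψ)·deg_{F,c_G}` pointwise;
(3) for every cut `S` with `γ(S) ≤ γ(Sᶜ)`, both `c(E_W(S,Sᶜ)) + r(S) ≥ ψ(vol_{W,c}(S) + r(S))`
and the analogous inequality with all edges reversed; (4) `emb` embeds each witness edge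
`(u,v)` as a directed `u`-`v` path of `G` with total congestion at most `1/(φψ)`. -/
structure IsWitness {V : Type*} [Fintype V] [DecidableEq V]
    (EG : Finset (V × V)) (cG : V × V → ℕ) (F : Finset (V × V))
    (EW : Finset (V × V)) (c : V × V → ℕ) (r : V → ℕ) (emb : V × V → List V)
    (γ : V → ℕ) (R : ℕ) (φ ψ : ℝ) : Prop where
  r_bound : ∑ v, r v ≤ R
  deg_lower : ∀ v, degCap F cG v ≤ degCap EW c v + r v
  deg_upper : ∀ v, ψ * ((degCap EW c v : ℝ) + (r v : ℝ)) ≤ (degCap F cG v : ℝ)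
  exp_out : ∀ S : Finset V, ∑ v ∈ S, γ v ≤ ∑ v ∈ Sᶜ, γ v →
    ψ * ((volCap EW c S : ℝ) + ∑ v ∈ S, (r v : ℝ)) ≤
      (cutCap EW c S Sᶜ : ℝ) + ∑ v ∈ S, (r v : ℝ)
  exp_in : ∀ S : Finset V, ∑ v ∈ S, γ v ≤ ∑ v ∈ Sᶜ, γ v →
    ψ * ((volCap EW c S : ℝ) + ∑ v ∈ S, (r v : ℝ)) ≤
      (cutCap EW c Sᶜ S : ℝ) + ∑ v ∈ S, (r v : ℝ)
  emb_path : ∀ e ∈ EW, (emb e).Chain' (fun u v => (u, v) ∈ EG) ∧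
    (emb e).head? = some e.1 ∧ (emb e).getLast? = some e.2
  congestion : ∀ eG ∈ EG,
    φ * ψ * (∑ e ∈ EW.filter (fun e => eG ∈ (emb e).zip (emb e).tail), (c e : ℝ)) ≤ (cG eG : ℝ)


lemma chainZip {α : Type*} {R : α → α → Prop} :
    ∀ {l : List α}, l.Chain' R → ∀ p ∈ l.zip l.tail, R p.1 p.2
  | [], _, p, hp => by simp at hp
  | [a], _, p, hp => by simp at hp
  | a :: b :: t, h, p, hp => by
    rcases List.mem_cons.mp hp with rfl | hp'
    · exact h.rel_head
    · exact chainZip h.tail p hp'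

lemma existsCross {V : Type*} [DecidableEq V] (S : Finset V) :
    ∀ (l : List V) (u v : V), l.head? = some u → l.getLast? = some v →
      u ∈ S → v ∉ S → ∃ p ∈ l.zip l.tail, p.1 ∈ S ∧ p.2 ∉ S
  | [], u, v, hh, _, _, _ => by simp at hh
  | [a], u, v, hh, hl, hu, hv => by
    simp at hh hl; subst hh; subst hl; exact absurd hu hv
  | a :: b :: t, u, v, hh, hl, hu, hv => by
    obtain rfl : a = u := by simpa using hh
    by_cases hb : b ∈ S
    · have hl' : (b :: t).getLast? = some v := by
        rw [← hl]; simp [List.getLast?]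
      obtain ⟨p, hp, hps⟩ := existsCross S (b :: t) b v rfl hl' hb hv
      exact ⟨p, List.mem_cons_of_mem _ hp, hps⟩
    · exact ⟨(a, b), by simp, hu, hb⟩

/-- If `(G, c_G, F)` admits an `(R,φ,ψ)`-witness (w.r.t. some `γ`), then `G`
contains no cut `S` that is both `(2R/ψ)`-balanced and `(φψ²/2)`-sparse with respect to `F`. -/
theorem stmt_13 {V : Type*} [Fintype V] [DecidableEq V]
    (EG : Finset (V × V)) (cG : V × V → ℕ) (F : Finset (V × V)) (hF : F ⊆ EG)
    (EW : Finset (V × V)) (c : V × V → ℕ) (r : V → ℕ) (emb : V × V → List V) (γ : V → ℕ)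
    (R : ℕ) (φ ψ : ℝ) (hφ : 0 < φ) (hψ0 : 0 < ψ) (hψ1 : ψ ≤ 1)
    (hW : IsWitness EG cG F EW c r emb γ R φ ψ) :
    ¬ ∃ S : Finset V,
        2 * (R : ℝ) / ψ ≤ min (volCap F cG S : ℝ) (volCap F cG Sᶜ : ℝ) ∧
        min (cutCap EG cG S Sᶜ : ℝ) (cutCap EG cG Sᶜ S : ℝ) <
          φ * ψ ^ 2 / 2 * min (volCap F cG S : ℝ) (volCap F cG Sᶜ : ℝ) := by
  rintro ⟨S, hbal, hsp⟩
  classical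
  have hφψ : (0:ℝ) ≤ φ * ψ := le_of_lt (mul_pos hφ hψ0)
  have hcount : ∀ A : Finset V, cutCap EW c A Aᶜ ≤
      ∑ eG ∈ EG.filter (fun e => e.1 ∈ A ∧ e.2 ∈ Aᶜ),
        ∑ e ∈ EW.filter (fun e => eG ∈ (emb e).zip (emb e).tail), c e := by
    intro A
    have step : ∀ e ∈ EW, (if e.1 ∈ A ∧ e.2 ∈ Aᶜ then c e else 0) ≤
        ((EG.filter (fun e => e.1 ∈ A ∧ e.2 ∈ Aᶜ)).filter
          (fun eG => eG ∈ (emb e).zip (emb e).tail)).card * c e := by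
      intro e he
      split_ifs with h
      · obtain ⟨hpath, hhd, hlt⟩ := hW.emb_path e he
        obtain ⟨p, hp, hp1, hp2⟩ :=
          existsCross A (emb e) e.1 e.2 hhd hlt h.1 (by simpa using h.2)
        have hmem : p ∈ (EG.filter (fun e => e.1 ∈ A ∧ e.2 ∈ Aᶜ)).filter
            (fun eG => eG ∈ (emb e).zip (emb e).tail) := by
          refine mem_filter.mpr ⟨mem_filter.mpr ⟨?_, hp1, by simpa using hp2⟩, hp⟩
          have := chainZip hpath p hp
          simpa using this
        have hcard : 1 ≤ ((EG.filter (fun e => e.1 ∈ A ∧ e.2 ∈ Aᶜ)).filter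
            (fun eG => eG ∈ (emb e).zip (emb e).tail)).card :=
          card_pos.mpr ⟨p, hmem⟩
        calc c e = 1 * c e := (one_mul _).symm
          _ ≤ _ := Nat.mul_le_mul_right _ hcard
      · exact Nat.zero_le _
    calc cutCap EW c A Aᶜ = ∑ e ∈ EW, if e.1 ∈ A ∧ e.2 ∈ Aᶜ then c e else 0 := by
          rw [cutCap, sum_filter]
      _ ≤ ∑ e ∈ EW, ((EG.filter (fun e => e.1 ∈ A ∧ e.2 ∈ Aᶜ)).filter
            (fun eG => eG ∈ (emb e).zip (emb e).tail)).card * c e := sum_le_sum step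
      _ = ∑ e ∈ EW, ∑ eG ∈ EG.filter (fun e => e.1 ∈ A ∧ e.2 ∈ Aᶜ),
            if eG ∈ (emb e).zip (emb e).tail then c e else 0 := by
          refine sum_congr rfl fun e _ => ?_
          rw [← sum_filter, sum_const, smul_eq_mul]
      _ = ∑ eG ∈ EG.filter (fun e => e.1 ∈ A ∧ e.2 ∈ Aᶜ), ∑ e ∈ EW,
            if eG ∈ (emb e).zip (emb e).tail then c e else 0 := sum_comm
      _ = _ := by
          refine sum_congr rfl fun eG _ => ?_
          rw [sum_filter]
  have hemb : ∀ A : Finset V, φ * ψ * (cutCap EW c A Aᶜ : ℝ) ≤ (cutCap EG cG A Aᶜ : ℝ) := by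
    intro A
    have h1 : (cutCap EW c A Aᶜ : ℝ) ≤
        ∑ eG ∈ EG.filter (fun e => e.1 ∈ A ∧ e.2 ∈ Aᶜ),
          ∑ e ∈ EW.filter (fun e => eG ∈ (emb e).zip (emb e).tail), (c e : ℝ) := by
      exact_mod_cast hcount A
    calc φ * ψ * (cutCap EW c A Aᶜ : ℝ)
        ≤ φ * ψ * ∑ eG ∈ EG.filter (fun e => e.1 ∈ A ∧ e.2 ∈ Aᶜ),
            ∑ e ∈ EW.filter (fun e => eG ∈ (emb e).zip (emb e).tail), (c e : ℝ) :=
          mul_le_mul_of_nonneg_left h1 hφψ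
      _ = ∑ eG ∈ EG.filter (fun e => e.1 ∈ A ∧ e.2 ∈ Aᶜ),
            φ * ψ * ∑ e ∈ EW.filter (fun e => eG ∈ (emb e).zip (emb e).tail), (c e : ℝ) :=
          mul_sum _ _ _
      _ ≤ ∑ eG ∈ EG.filter (fun e => e.1 ∈ A ∧ e.2 ∈ Aᶜ), (cG eG : ℝ) :=
          sum_le_sum fun eG h => hW.congestion eG (mem_filter.mp h).1
      _ = (cutCap EG cG A Aᶜ : ℝ) := by rw [cutCap]; push_cast; rfl
  have hrS : ∀ A : Finset V, (∑ v ∈ A, (r v : ℝ)) ≤ (R : ℝ) := by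
    intro A
    have : ∑ v ∈ A, r v ≤ R :=
      le_trans (sum_le_sum_of_subset (subset_univ A)) hW.r_bound
    exact_mod_cast this
  have hvol : ∀ A : Finset V,
      (volCap F cG A : ℝ) ≤ (volCap EW c A : ℝ) + ∑ v ∈ A, (r v : ℝ) := by
    intro A
    have : volCap F cG A ≤ volCap EW c A + ∑ v ∈ A, r v := by
      rw [volCap, volCap, ← sum_add_distrib]
      exact sum_le_sum fun v _ => hW.deg_lower v
    exact_mod_cast this
  have key : ∀ A : Finset V, ∑ v ∈ A, γ v ≤ ∑ v ∈ Aᶜ, γ v →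
      2 * (R : ℝ) / ψ ≤ min (volCap F cG A : ℝ) (volCap F cG Aᶜ : ℝ) →
      φ * ψ ^ 2 / 2 * min (volCap F cG A : ℝ) (volCap F cG Aᶜ : ℝ) ≤
        min (cutCap EG cG A Aᶜ : ℝ) (cutCap EG cG Aᶜ A : ℝ) := by
    intro A hγ hb
    set m := min (volCap F cG A : ℝ) (volCap F cG Aᶜ : ℝ) with hm
    have hmA : m ≤ (volCap F cG A : ℝ) := min_le_left _ _
    have hRm : (R : ℝ) ≤ ψ * m / 2 := by
      rw [div_le_iff₀ hψ0] at hb; nlinarith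
    have hout := hW.exp_out A hγ
    have hin := hW.exp_in A hγ
    have h2 : ψ * (volCap F cG A : ℝ) ≤ ψ * ((volCap EW c A : ℝ) + ∑ v ∈ A, (r v : ℝ)) :=
      mul_le_mul_of_nonneg_left (hvol A) hψ0.le
    have hr := hrS A
    have hcW_out : ψ * m - (R : ℝ) ≤ (cutCap EW c A Aᶜ : ℝ) := by nlinarith
    have hcW_in : ψ * m - (R : ℝ) ≤ (cutCap EW c Aᶜ A : ℝ) := by nlinarith
    have hembc := hemb Aᶜ
    rw [compl_compl] at hembc
    have hout2 : φ * ψ ^ 2 / 2 * m ≤ (cutCap EG cG A Aᶜ : ℝ) := by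
      nlinarith [mul_le_mul_of_nonneg_left hcW_out hφψ,
        mul_le_mul_of_nonneg_left hRm hφψ, hemb A]
    have hin2 : φ * ψ ^ 2 / 2 * m ≤ (cutCap EG cG Aᶜ A : ℝ) := by
      nlinarith [mul_le_mul_of_nonneg_left hcW_in hφψ,
        mul_le_mul_of_nonneg_left hRm hφψ]
    exact le_min hout2 hin2
  rcases le_total (∑ v ∈ S, γ v) (∑ v ∈ Sᶜ, γ v) with hγ | hγ
  · have h' := key S hγ hbal
    linarith
  · have h' : φ * ψ ^ 2 / 2 * min (volCap F cG S : ℝ) (volCap F cG Sᶜ : ℝ) ≤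
        min (cutCap EG cG S Sᶜ : ℝ) (cutCap EG cG Sᶜ S : ℝ) := by
      rw [min_comm (volCap F cG S : ℝ), min_comm (cutCap EG cG S Sᶜ : ℝ)]
      simpa [compl_compl] using
        key Sᶜ (by simpa using hγ) (by rw [compl_compl, min_comm]; exact hbal)
    linarith
end

section
/- Let (G, c_G) be a capacitated directed graph, F ⊆ E, and φ, ψ > 0 with ψ ≤ 1. Suppose there exists an (R, φ, ψ)-witness of (G, c_G, F) with respect to some γ, where R < 1/φ. Then F is (φψ²/2)-expanding in (G, c_G): every strongly connected component of G contains no (φψ²/2)-sparse cut with respect to F, assuming every edge has capacity at least 1. -/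
open Finset

/-- Reachability along directed edges of `E`. -/
def reachF {V : Type*} [DecidableEq V] (E : Finset (V × V)) : V → V → Prop :=
  Relation.ReflTransGen fun u v => (u, v) ∈ E

/-- `C` is a strongly connected component of the graph with edge set `E`. -/
def IsSCCF {V : Type*} [DecidableEq V] (E : Finset (V × V)) (C : Finset V) : Prop :=
  C.Nonempty ∧ (∀ u ∈ C, ∀ v ∈ C, reachF E u v) ∧
    ∀ u ∈ C, ∀ v, reachF E u v → reachF E v u → v ∈ C

lemma list_cross {V : Type*} [DecidableEq V] (EG : Finset (V × V)) (A : Finset V) :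
    ∀ l : List V, l.Chain' (fun a b => (a, b) ∈ EG) →
      ∀ u v : V, l.head? = some u → l.getLast? = some v → u ∈ A → v ∉ A →
      ∃ p ∈ l.zip l.tail, p ∈ EG ∧ p.1 ∈ A ∧ p.2 ∉ A := by
  intro l
  induction l with
  | nil => simp
  | cons a t ih =>
    intro hch u v hh hl hu hv
    cases t with
    | nil =>
      simp only [List.head?, List.getLast?_singleton, Option.some.injEq] at hh hl
      subst hh; subst hl; exact absurd hu hv
    | cons b t' =>
      rw [List.Chain', List.isChain_cons_cons] at hch
      simp only [List.head?, Option.some.injEq] at hh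
      subst hh
      by_cases hb : b ∈ A
      · obtain ⟨p, hp, h1, h2, h3⟩ :=
          ih hch.2 b v rfl (by rw [← hl, List.getLast?_cons_cons]) hb hv
        exact ⟨p, by simp only [List.tail_cons, List.zip_cons_cons, List.mem_cons]; right; exact hp,
          h1, h2, h3⟩
      · exact ⟨(a, b), by simp, hch.1, hu, hb⟩

lemma reach_cross {V : Type*} [DecidableEq V] (EG : Finset (V × V)) (A : Finset V) {u v : V}
    (h : reachF EG u v) (hu : u ∈ A) : v ∉ A →
    ∃ x y, (x, y) ∈ EG ∧ x ∈ A ∧ y ∉ A ∧ reachF EG u y ∧ reachF EG y v := by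
  induction h with
  | refl => exact fun hv => absurd hu hv
  | @tail b cc hub hbc ih =>
    intro hv
    by_cases hb : b ∈ A
    · exact ⟨b, cc, hbc, hb, hv, Relation.ReflTransGen.tail hub hbc, Relation.ReflTransGen.refl⟩
    · obtain ⟨x, y, h1, h2, h3, h4, h5⟩ := ih hb
      exact ⟨x, y, h1, h2, h3, h4, Relation.ReflTransGen.tail h5 hbc⟩

lemma key_side {V : Type*} [Fintype V] [DecidableEq V]
    (EG : Finset (V × V)) (cG : V × V → ℕ) (F : Finset (V × V))
    (EW : Finset (V × V)) (c : V × V → ℕ) (r : V → ℕ) (emb : V × V → List V) (γ : V → ℕ)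
    (R : ℕ) (φ ψ : ℝ) (hφ : 0 < φ) (hψ0 : 0 < ψ) (hψ1 : ψ ≤ 1)
    (hcap : ∀ e ∈ EG, 1 ≤ cG e) (hR : (R : ℝ) < 1 / φ)
    (hW : IsWitness EG cG F EW c r emb γ R φ ψ)
    (C : Finset V) (hC : IsSCCF EG C) (S T : Finset V)
    (hS : S ⊆ C) (hT : T ⊆ C) (hd : ∀ x ∈ S, x ∉ T) (hcover : ∀ x ∈ C, x ∉ S → x ∈ T)
    (hSne : S.Nonempty) (hTne : T.Nonempty) :
    φ * ψ ^ 2 / 2 * min (volCap F cG S : ℝ) (volCap F cG T : ℝ) ≤ (cutCap EG cG S T : ℝ) := by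
  classical
  obtain ⟨hCne, hconn, hmax⟩ := hC
  set m : ℝ := min (volCap F cG S : ℝ) (volCap F cG T : ℝ) with hm
  have hm0 : 0 ≤ m := le_min (by positivity) (by positivity)
  -- there is at least one edge from S to T
  have h1cut : (1 : ℝ) ≤ (cutCap EG cG S T : ℝ) := by
    obtain ⟨s, hs⟩ := hSne
    obtain ⟨t, ht⟩ := hTne
    have hreach : reachF EG s t := hconn s (hS hs) t (hT ht)
    have htS : t ∉ S := fun h => hd t h ht
    obtain ⟨x, y, hxy, hxS, hyS, hsy, hyt⟩ := reach_cross EG S hreach hs htS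
    have hyC : y ∈ C := hmax s (hS hs) y hsy
      (Relation.ReflTransGen.trans hyt (hconn t (hT ht) s (hS hs)))
    have hyT : y ∈ T := hcover y hyC hyS
    have hmem : (x, y) ∈ EG.filter (fun e => e.1 ∈ S ∧ e.2 ∈ T) := by
      simp [Finset.mem_filter, hxy, hxS, hyT]
    have : 1 ≤ cutCap EG cG S T :=
      le_trans (hcap _ hxy) (Finset.single_le_sum (f := cG) (fun i _ => Nat.zero_le _) hmem)
    exact_mod_cast this
  have hφψ2 : 0 < φ * ψ ^ 2 := by positivity
  by_cases hsmall : m ≤ 2 / (φ * ψ ^ 2)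
  · calc φ * ψ ^ 2 / 2 * m ≤ φ * ψ ^ 2 / 2 * (2 / (φ * ψ ^ 2)) := by
          apply mul_le_mul_of_nonneg_left hsmall; positivity
      _ = 1 := by field_simp
      _ ≤ _ := h1cut
  · push_neg at hsmall
    -- hsmall : 2 / (φ * ψ ^ 2) < m
    set A : Finset V :=
      S ∪ Finset.univ.filter (fun w => w ∉ C ∧ ∃ x ∈ S, reachF EG x w) with hA
    have hSA : S ⊆ A := Finset.subset_union_left
    have hTA : ∀ x ∈ T, x ∉ A := by
      intro x hx hxA
      rcases Finset.mem_union.1 hxA with h | h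
      · exact hd x h hx
      · exact (Finset.mem_filter.1 h).2.1 (hT hx)
    have hcross : ∀ e ∈ EG, e.1 ∈ A → e.2 ∉ A → e.1 ∈ S ∧ e.2 ∈ T := by
      intro e he h1 h2
      have he' : (e.1, e.2) ∈ EG := by simpa using he
      rcases Finset.mem_union.1 h1 with h1S | h1D
      · refine ⟨h1S, ?_⟩
        by_cases h2C : e.2 ∈ C
        · exact hcover e.2 h2C (fun hS2 => h2 (hSA hS2))
        · exact absurd (Finset.mem_union_right _ (Finset.mem_filter.2
            ⟨Finset.mem_univ _, h2C, e.1, h1S, Relation.ReflTransGen.single he'⟩)) h2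
      · exfalso
        obtain ⟨-, h1C, x, hxS, hx1⟩ := Finset.mem_filter.1 h1D
        have hx2 : reachF EG x e.2 := Relation.ReflTransGen.tail hx1 he'
        by_cases h2C : e.2 ∈ C
        · exact h1C (hmax x (hS hxS) e.1 hx1 (Relation.ReflTransGen.trans
            (Relation.ReflTransGen.single he') (hconn e.2 h2C x (hS hxS))))
        · exact h2 (Finset.mem_union_right _ (Finset.mem_filter.2
            ⟨Finset.mem_univ _, h2C, x, hxS, hx2⟩))
    have hsub : EG.filter (fun e => e.1 ∈ A ∧ e.2 ∈ Aᶜ) ⊆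
        EG.filter (fun e => e.1 ∈ S ∧ e.2 ∈ T) := by
      intro e he
      obtain ⟨heG, h1, h2⟩ := Finset.mem_filter.1 he
      exact Finset.mem_filter.2 ⟨heG, hcross e heG h1 (Finset.mem_compl.1 h2)⟩
    have hGmono : cutCap EG cG A Aᶜ ≤ cutCap EG cG S T :=
      Finset.sum_le_sum_of_subset hsub
    -- bound on r-sums
    have hrB : ∀ B : Finset V, (∑ v ∈ B, (r v : ℝ)) ≤ (R : ℝ) := by
      intro B
      have : ∑ v ∈ B, r v ≤ R :=
        le_trans (Finset.sum_le_sum_of_subset (Finset.subset_univ B)) hW.r_bound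
      exact_mod_cast this
    have hrB0 : ∀ B : Finset V, (0:ℝ) ≤ ∑ v ∈ B, (r v : ℝ) := fun B => by positivity
    have hvolF : ∀ B : Finset V,
        (volCap F cG B : ℝ) ≤ (volCap EW c B : ℝ) + ∑ v ∈ B, (r v : ℝ) := by
      intro B
      have : volCap F cG B ≤ volCap EW c B + ∑ v ∈ B, r v := by
        rw [volCap, volCap, ← Finset.sum_add_distrib]
        exact Finset.sum_le_sum fun v _ => hW.deg_lower v
      exact_mod_cast this
    -- R is at most ψ m / 2
    have hRm : (R : ℝ) ≤ ψ * m / 2 := by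
      have h1 : 1 / φ ≤ 1 / (φ * ψ) := by
        apply one_div_le_one_div_of_le (by positivity)
        nlinarith
      have h2 : 1 / (φ * ψ) ≤ ψ * m / 2 := by
        have e : ψ * (2 / (φ * ψ ^ 2)) / 2 = 1 / (φ * ψ) := by
          field_simp
        rw [← e]
        have := hsmall.le
        gcongr
      linarith
    -- lower bound on witness cut
    have hcutW : ψ * m / 2 ≤ (cutCap EW c A Aᶜ : ℝ) := by
      have key : ∀ B : Finset V, m ≤ (volCap F cG B : ℝ) →
          ψ * ((volCap EW c B : ℝ) + ∑ v ∈ B, (r v : ℝ)) ≤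
            (cutCap EW c A Aᶜ : ℝ) + ∑ v ∈ B, (r v : ℝ) →
          ψ * m / 2 ≤ (cutCap EW c A Aᶜ : ℝ) := by
        intro B hmB hexp
        have h1 : ψ * m ≤ ψ * ((volCap EW c B : ℝ) + ∑ v ∈ B, (r v : ℝ)) := by
          apply mul_le_mul_of_nonneg_left _ hψ0.le
          exact le_trans hmB (hvolF B)
        have h2 := hrB B
        linarith
      rcases le_total (∑ v ∈ A, γ v) (∑ v ∈ Aᶜ, γ v) with hγ | hγ
      · refine key A ?_ (hW.exp_out A hγ)
        have : volCap F cG S ≤ volCap F cG A :=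
          Finset.sum_le_sum_of_subset hSA
        calc m ≤ (volCap F cG S : ℝ) := min_le_left _ _
          _ ≤ _ := by exact_mod_cast this
      · have hγ' : ∑ v ∈ Aᶜ, γ v ≤ ∑ v ∈ (Aᶜ)ᶜ, γ v := by rwa [compl_compl]
        have hexp := hW.exp_in (Aᶜ) hγ'
        rw [compl_compl] at hexp
        refine key (Aᶜ) ?_ hexp
        have hTsub : T ⊆ Aᶜ := fun x hx => Finset.mem_compl.2 (hTA x hx)
        have : volCap F cG T ≤ volCap F cG (Aᶜ) :=
          Finset.sum_le_sum_of_subset hTsub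
        calc m ≤ (volCap F cG T : ℝ) := min_le_right _ _
          _ ≤ _ := by exact_mod_cast this
    -- congestion argument
    set K : Finset (V × V) := EG.filter (fun e => e.1 ∈ A ∧ e.2 ∈ Aᶜ) with hK
    have hload : cutCap EW c A Aᶜ ≤
        ∑ eG ∈ K, ∑ e ∈ EW.filter (fun e => eG ∈ (emb e).zip (emb e).tail), c e := by
      rw [cutCap]
      calc ∑ e ∈ EW.filter (fun e => e.1 ∈ A ∧ e.2 ∈ Aᶜ), c e
          ≤ ∑ e ∈ EW.filter (fun e => e.1 ∈ A ∧ e.2 ∈ Aᶜ),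
              ∑ eG ∈ K, if eG ∈ (emb e).zip (emb e).tail then c e else 0 := by
            apply Finset.sum_le_sum
            intro e he
            obtain ⟨heW, h1, h2⟩ := Finset.mem_filter.1 he
            obtain ⟨hch, hh, hl⟩ := hW.emb_path e heW
            obtain ⟨p, hpz, hpEG, hp1, hp2⟩ :=
              list_cross EG A (emb e) hch e.1 e.2 hh hl h1 (Finset.mem_compl.1 h2)
            have hpK : p ∈ K := Finset.mem_filter.2 ⟨hpEG, hp1, Finset.mem_compl.2 hp2⟩
            calc c e = if p ∈ (emb e).zip (emb e).tail then c e else 0 := by rw [if_pos hpz]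
              _ ≤ _ := Finset.single_le_sum (f := fun eG =>
                  if eG ∈ (emb e).zip (emb e).tail then c e else 0)
                  (fun i _ => by positivity) hpK
        _ = ∑ eG ∈ K, ∑ e ∈ EW.filter (fun e => e.1 ∈ A ∧ e.2 ∈ Aᶜ),
              if eG ∈ (emb e).zip (emb e).tail then c e else 0 := Finset.sum_comm
        _ ≤ ∑ eG ∈ K, ∑ e ∈ EW, if eG ∈ (emb e).zip (emb e).tail then c e else 0 := by
            apply Finset.sum_le_sum
            intro eG _
            exact Finset.sum_le_sum_of_subset (Finset.filter_subset _ _)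
        _ = ∑ eG ∈ K, ∑ e ∈ EW.filter (fun e => eG ∈ (emb e).zip (emb e).tail), c e := by
            refine Finset.sum_congr rfl fun eG _ => ?_
            rw [Finset.sum_filter]
    have hcong : φ * ψ * (cutCap EW c A Aᶜ : ℝ) ≤ (cutCap EG cG A Aᶜ : ℝ) := by
      have hload' : (cutCap EW c A Aᶜ : ℝ) ≤
          ∑ eG ∈ K, ∑ e ∈ EW.filter (fun e => eG ∈ (emb e).zip (emb e).tail), (c e : ℝ) := by
        exact_mod_cast hload
      calc φ * ψ * (cutCap EW c A Aᶜ : ℝ)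
          ≤ φ * ψ * ∑ eG ∈ K, ∑ e ∈ EW.filter
              (fun e => eG ∈ (emb e).zip (emb e).tail), (c e : ℝ) := by
            apply mul_le_mul_of_nonneg_left hload'; positivity
        _ = ∑ eG ∈ K, φ * ψ * ∑ e ∈ EW.filter
              (fun e => eG ∈ (emb e).zip (emb e).tail), (c e : ℝ) := Finset.mul_sum _ _ _
        _ ≤ ∑ eG ∈ K, (cG eG : ℝ) := by
            apply Finset.sum_le_sum
            intro eG hG
            exact hW.congestion eG (Finset.mem_filter.1 hG).1
        _ = (cutCap EG cG A Aᶜ : ℝ) := by rw [cutCap]; push_cast; rfl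
    calc φ * ψ ^ 2 / 2 * m = φ * ψ * (ψ * m / 2) := by ring
      _ ≤ φ * ψ * (cutCap EW c A Aᶜ : ℝ) := by
          apply mul_le_mul_of_nonneg_left hcutW; positivity
      _ ≤ (cutCap EG cG A Aᶜ : ℝ) := hcong
      _ ≤ (cutCap EG cG S T : ℝ) := by exact_mod_cast hGmono

/-- If `(G, c_G, F)` admits an `(R,φ,ψ)`-witness with `R < 1/φ` and every
edge of `G` has capacity at least `1`, then `F` is `(φψ²/2)`-expanding in `(G, c_G)`: no
strongly connected component of `G` contains a `(φψ²/2)`-sparse cut with respect to `F`. -/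
theorem stmt_14 {V : Type*} [Fintype V] [DecidableEq V]
    (EG : Finset (V × V)) (cG : V × V → ℕ) (F : Finset (V × V)) (hF : F ⊆ EG)
    (EW : Finset (V × V)) (c : V × V → ℕ) (r : V → ℕ) (emb : V × V → List V) (γ : V → ℕ)
    (R : ℕ) (φ ψ : ℝ) (hφ : 0 < φ) (hψ0 : 0 < ψ) (hψ1 : ψ ≤ 1)
    (hcap : ∀ e ∈ EG, 1 ≤ cG e) (hR : (R : ℝ) < 1 / φ)
    (hW : IsWitness EG cG F EW c r emb γ R φ ψ) :
    ∀ C : Finset V, IsSCCF EG C → ∀ S ⊆ C, S.Nonempty → S ≠ C →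
      φ * ψ ^ 2 / 2 * min (volCap F cG S : ℝ) (volCap F cG (C \ S) : ℝ) ≤
        min (cutCap EG cG S (C \ S) : ℝ) (cutCap EG cG (C \ S) S : ℝ) := by
  intro C hC S hSC hSne hSneC
  have hTne : (C \ S).Nonempty := by
    rw [Finset.sdiff_nonempty]
    intro h
    exact hSneC (Finset.Subset.antisymm hSC h)
  refine le_min ?_ ?_
  · exact key_side EG cG F EW c r emb γ R φ ψ hφ hψ0 hψ1 hcap hR hW C hC S (C \ S) hSC
      Finset.sdiff_subset (fun x hx hx2 => (Finset.mem_sdiff.1 hx2).2 hx)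
      (fun x hxC hxS => Finset.mem_sdiff.2 ⟨hxC, hxS⟩) hSne hTne
  · rw [min_comm]
    exact key_side EG cG F EW c r emb γ R φ ψ hφ hψ0 hψ1 hcap hR hW C hC (C \ S) S
      Finset.sdiff_subset hSC (fun x hx => (Finset.mem_sdiff.1 hx).2)
      (fun x hxC hxT => by by_contra h; exact hxT (Finset.mem_sdiff.2 ⟨hxC, h⟩)) hTne hSne
end
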